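/- arXiv:1305.7484 — 6 statements merged into one kernel-verified Lean document; each statement's English description precedes it below -/
import Mathlib

section
/- Suppose v ∈ C¹([0,T]×ℝⁿ) and continuous functions p₁,…,p_m : [0,T]×ℝⁿ → ℝ satisfy, for all (t,x) ∈ [0,T]×X, (L_f v)(t,x) + Σ_{i=1}^m p_i(t,x) ≤ 0 and p_i(t,x) ≥ |[L_g v]_i(t,x)| for each i = 1,…,m. Then for every measurable feedback u : [0,T]×ℝⁿ → U and every solution x(·) with control u satisfying x(t) ∈ X for all t ∈ [0,T], the function t ↦ v(t, x(t)) is nonincreasing on [0,T]; in particular v(T, x(T)) ≤ v(0, x(0)). -/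
open MeasureTheory Set Filter
open Topology Asymptotics

noncomputable section

/-- The operator `L_f v (t,x) = ∂v/∂t (t,x) + ∑ i, ∂v/∂x_i (t,x) * f_i (t,x)`,
expressed as the Fréchet derivative of `v` at `(t,x)` applied to `(1, f (t,x))`. -/
def Lf (n : ℕ) (f : ℝ × (Fin n → ℝ) → Fin n → ℝ)
    (v : ℝ × (Fin n → ℝ) → ℝ) : ℝ × (Fin n → ℝ) → ℝ :=
  fun q => fderiv ℝ v q (1, f q)

/-- The operator `[L_g v]_j (t,x) = ∑ i, ∂v/∂x_i (t,x) * g_{ij} (t,x)`. -/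
def Lg (n m : ℕ) (g : ℝ × (Fin n → ℝ) → Fin n → Fin m → ℝ)
    (v : ℝ × (Fin n → ℝ) → ℝ) : ℝ × (Fin n → ℝ) → Fin m → ℝ :=
  fun q j => fderiv ℝ v q (0, fun i => g q i j)

/-- A Carathéodory solution of `ẋ = f(t,x) + g(t,x) u(t,x)` on `[0,T]`: an absolutely
continuous curve satisfying the corresponding integral equation. -/
def IsSolution (n m : ℕ) (T : ℝ) (f : ℝ × (Fin n → ℝ) → Fin n → ℝ)
    (g : ℝ × (Fin n → ℝ) → Fin n → Fin m → ℝ)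
    (u : ℝ × (Fin n → ℝ) → Fin m → ℝ) (x : ℝ → Fin n → ℝ) : Prop :=
  ContinuousOn x (Icc 0 T) ∧
  IntervalIntegrable
    (fun s => (fun i => f (s, x s) i + ∑ j, g (s, x s) i j * u (s, x s) j)) volume 0 T ∧
  ∀ t ∈ Icc (0:ℝ) T,
    x t = x 0 + ∫ s in (0:ℝ)..t, (fun i => f (s, x s) i + ∑ j, g (s, x s) i j * u (s, x s) j)

set_option maxHeartbeats 1000000 in
theorem dual_constraints_imply_v_nonincreasing
    (n m : ℕ) (T : ℝ) (hT : 0 < T)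
    (f : ℝ × (Fin n → ℝ) → Fin n → ℝ) (g : ℝ × (Fin n → ℝ) → Fin n → Fin m → ℝ)
    (hf : Continuous f) (hg : Continuous g)
    (X : Set (Fin n → ℝ)) (hX : IsCompact X)
    (v : ℝ × (Fin n → ℝ) → ℝ) (hv : ContDiff ℝ 1 v)
    (p : Fin m → ℝ × (Fin n → ℝ) → ℝ) (hp : ∀ i, Continuous (p i))
    (hineq1 : ∀ q ∈ Icc (0:ℝ) T ×ˢ X, Lf n f v q + ∑ i, p i q ≤ 0)
    (hineq2 : ∀ q ∈ Icc (0:ℝ) T ×ˢ X, ∀ i, |Lg n m g v q i| ≤ p i q)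
    (u : ℝ × (Fin n → ℝ) → Fin m → ℝ) (hu : Measurable u)
    (huU : ∀ q j, u q j ∈ Icc (-1:ℝ) 1)
    (x : ℝ → Fin n → ℝ) (hx : IsSolution n m T f g u x)
    (hxX : ∀ t ∈ Icc (0:ℝ) T, x t ∈ X) :
    AntitoneOn (fun t => v (t, x t)) (Icc 0 T) ∧ v (T, x T) ≤ v (0, x 0) := by
  obtain ⟨hxc, hFint, hxeq⟩ := hx
  set F : ℝ → Fin n → ℝ :=
    fun s => (fun i => f (s, x s) i + ∑ j, g (s, x s) i j * u (s, x s) j) with hFdef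
  set φ : ℝ → ℝ := fun t => v (t, x t) with hφdef
  -- vector decomposition of the right-hand side
  have hFdec : ∀ s, F s = f (s, x s) + ∑ j, u (s, x s) j • (fun i => g (s, x s) i j) := by
    intro s; funext i
    simp [hFdef, Finset.sum_apply, mul_comm]
  -- continuity of the curve
  have hγ : ContinuousOn (fun s => ((s, x s) : ℝ × (Fin n → ℝ))) (Icc 0 T) :=
    continuousOn_id.prodMk hxc
  have hφc : ContinuousOn φ (Icc 0 T) := hv.continuous.comp_continuousOn hγ
  -- a bound on `F` on `[0,T]`
  have hΦc : ContinuousOn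
      (fun s => ‖f (s, x s)‖ + ∑ j, ‖(fun i => g (s, x s) i j)‖) (Icc 0 T) := by
    refine ContinuousOn.add ((hf.comp_continuousOn hγ).norm) ?_
    refine continuousOn_finset_sum _ fun j _ => ContinuousOn.norm ?_
    exact (continuous_pi fun i => (continuous_apply j).comp ((continuous_apply i).comp hg)).comp_continuousOn hγ
  obtain ⟨s0, hs0, hmax'⟩ :=
    isCompact_Icc.exists_isMaxOn (nonempty_Icc.2 hT.le) hΦc
  have hmax := isMaxOn_iff.1 hmax'
  set M : ℝ := ‖f (s0, x s0)‖ + ∑ j, ‖(fun i => g (s0, x s0) i j)‖ with hMdef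
  have hMF : ∀ s ∈ Icc (0:ℝ) T, ‖F s‖ ≤ M := by
    intro s hs
    rw [hFdec s]
    calc ‖f (s, x s) + ∑ j, u (s, x s) j • (fun i => g (s, x s) i j)‖
        ≤ ‖f (s, x s)‖ + ‖∑ j, u (s, x s) j • (fun i => g (s, x s) i j)‖ := norm_add_le _ _
      _ ≤ ‖f (s, x s)‖ + ∑ j, ‖u (s, x s) j • (fun i => g (s, x s) i j)‖ :=
          add_le_add_right (norm_sum_le _ _) _
      _ ≤ ‖f (s, x s)‖ + ∑ j, ‖(fun i => g (s, x s) i j)‖ := by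
          refine add_le_add_right (Finset.sum_le_sum fun j _ => ?_) _
          rw [norm_smul]
          refine mul_le_of_le_one_left (norm_nonneg _) ?_
          rw [Real.norm_eq_abs]
          exact abs_le.2 ⟨(huU (s, x s) j).1, (huU (s, x s) j).2⟩
      _ ≤ M := hmax s hs
  have hM0 : (0:ℝ) ≤ M := by positivity
  have hC0 : (0:ℝ) < M + 1 := by linarith
  set C : ℝ := M + 1 with hCdef
  -- restricted integrability
  have hFi : ∀ a ∈ Icc (0:ℝ) T, ∀ b ∈ Icc (0:ℝ) T, IntervalIntegrable F volume a b :=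
    fun a ha b hb => hFint.mono_set (by rw [uIcc_of_le hT.le]; exact uIcc_subset_Icc ha hb)
  -- increments of `x` in integral form
  have hxdiff : ∀ a ∈ Icc (0:ℝ) T, ∀ b ∈ Icc (0:ℝ) T,
      x b - x a = ∫ r in a..b, F r := by
    intro a ha b hb
    have h1 := hxeq b hb
    have h2 := hxeq a ha
    have := intervalIntegral.integral_interval_sub_left
      (hFi 0 (left_mem_Icc.2 hT.le) b hb) (hFi 0 (left_mem_Icc.2 hT.le) a ha)
    rw [h1, h2]
    rw [← this]
    abel
  -- the key right-slope estimate
  have key : ∀ t ∈ Ico (0:ℝ) T, ∀ r > (0:ℝ),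
      ∀ᶠ s in 𝓝[>] t, φ s - φ t ≤ r * (s - t) := by
    intro t ht r hr
    have htIcc : t ∈ Icc (0:ℝ) T := ⟨ht.1, ht.2.le⟩
    set q : ℝ × (Fin n → ℝ) := (t, x t) with hqdef
    set Dv : (ℝ × (Fin n → ℝ)) →L[ℝ] ℝ := fderiv ℝ v q with hDvdef
    set ℓ : (Fin n → ℝ) →L[ℝ] ℝ :=
      Dv.comp (ContinuousLinearMap.inr ℝ ℝ (Fin n → ℝ)) with hℓdef
    have hℓ : ∀ y : Fin n → ℝ, ℓ y = Dv (0, y) := fun y => rfl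
    set H : ℝ → ℝ :=
      fun s => ℓ (f (s, x s)) + ∑ j, |ℓ (fun i => g (s, x s) i j)| with hHdef
    have hHcont : ContinuousOn H (Icc 0 T) := by
      refine ContinuousOn.add (ℓ.continuous.comp_continuousOn (hf.comp_continuousOn hγ)) ?_
      refine continuousOn_finset_sum _ fun j _ => ContinuousOn.abs ?_
      exact ℓ.continuous.comp_continuousOn
        ((continuous_pi fun i =>
          (continuous_apply j).comp ((continuous_apply i).comp hg)).comp_continuousOn hγ)
    -- the dual constraints give nonpositivity at `t`
    have hqmem : q ∈ Icc (0:ℝ) T ×ˢ X := ⟨htIcc, hxX t htIcc⟩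
    have hD : Dv (1, 0) + H t ≤ 0 := by
      have h1 := hineq1 q hqmem
      have h2 := hineq2 q hqmem
      have hLf : Lf n f v q = Dv (1, 0) + ℓ (f q) := by
        have : ((1:ℝ), f q) = ((1:ℝ), (0 : Fin n → ℝ)) + ((0:ℝ), f q) := by
          simp [Prod.ext_iff]
        rw [Lf, ← hDvdef, this, map_add, hℓ]
      have hLg : ∀ j, Lg n m g v q j = ℓ (fun i => g q i j) := by
        intro j; rw [Lg, ← hDvdef, hℓ]
      have hHt : H t = ℓ (f q) + ∑ j, |Lg n m g v q j| := by
        rw [hHdef]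
        simp only [← hqdef, hLg]
      rw [hHt]
      have hsum : ∑ j, |Lg n m g v q j| ≤ ∑ j, p j q :=
        Finset.sum_le_sum fun j _ => h2 j
      have := hLf ▸ h1
      linarith
    -- differentiability of `v` at `q`
    have hdv : HasFDerivAt v Dv q := (hv.differentiable one_ne_zero q).hasFDerivAt
    have hγt : Tendsto (fun s => ((s, x s) : ℝ × (Fin n → ℝ))) (𝓝[>] t) (𝓝 q) := by
      have hle : 𝓝[>] t ≤ 𝓝[Icc (0:ℝ) T] t := by
        rw [← nhdsWithin_Ioc_eq_nhdsGT ht.2]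
        exact nhdsWithin_mono t fun z hz => ⟨ht.1.trans hz.1.le, hz.2⟩
      exact (hγ t htIcc).mono_left hle
    have hε : (0:ℝ) < r / (3 * C) := by positivity
    have heps := hγt.eventually (hdv.isLittleO.def hε)
    -- `H` is close to `H t` to the right of `t`
    have hHev : ∀ᶠ s in 𝓝[>] t, ∀ z ∈ Icc t s, H z ≤ H t + r / 3 := by
      have hHt : Tendsto H (𝓝[Icc (0:ℝ) T] t) (𝓝 (H t)) := hHcont t htIcc
      have h1 : ∀ᶠ z in 𝓝[Icc (0:ℝ) T] t, H z < H t + r / 3 :=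
        hHt.eventually_lt_const (by linarith)
      obtain ⟨O, hO, htO, hsub⟩ := mem_nhdsWithin.1 h1
      obtain ⟨δ, hδ, hball⟩ := Metric.isOpen_iff.1 hO t htO
      filter_upwards [Ioc_mem_nhdsGT ht.2,
        Ioo_mem_nhdsGT (lt_add_of_pos_right t hδ)] with s hs1 hs2
      intro z hz
      have hzIcc : z ∈ Icc (0:ℝ) T := ⟨ht.1.trans hz.1, hz.2.trans hs1.2⟩
      have hzO : z ∈ O := by
        apply hball
        rw [Metric.mem_ball, Real.dist_eq, abs_of_nonneg (by linarith [hz.1])]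
        have := hz.2
        have := hs2.2
        linarith
      exact (hsub ⟨hzO, hzIcc⟩).le
    filter_upwards [heps, hHev, Ioc_mem_nhdsGT ht.2] with s hs1 hs2 hs3
    have hst : t < s := hs3.1
    have hsT : s ≤ T := hs3.2
    have hsIcc : s ∈ Icc (0:ℝ) T := ⟨ht.1.trans hst.le, hsT⟩
    have hxd : x s - x t = ∫ r in t..s, F r := hxdiff t htIcc s hsIcc
    -- the norm of the increment of the curve
    have hnorm : ‖((s, x s) : ℝ × (Fin n → ℝ)) - q‖ ≤ C * (s - t) := by
      have h1 : ((s, x s) : ℝ × (Fin n → ℝ)) - q = (s - t, x s - x t) := rfl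
      rw [h1, Prod.norm_def]
      dsimp only
      refine max_le ?_ ?_
      · rw [Real.norm_eq_abs, abs_of_pos (by linarith)]
        nlinarith [mul_nonneg hM0 (sub_pos.2 hst).le]
      · rw [hxd]
        have := intervalIntegral.norm_integral_le_of_norm_le_const
          (C := M) (f := F) (a := t) (b := s) ?_
        · rw [abs_of_pos (sub_pos.2 hst)] at this
          refine this.trans ?_
          nlinarith [mul_nonneg hM0 (sub_pos.2 hst).le, sub_pos.2 hst]
        · intro z hz
          rw [uIoc_of_le hst.le] at hz
          exact hMF z ⟨ht.1.trans hz.1.le, hz.2.trans hsT⟩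
    -- decompose the derivative term
    have hdecomp : ((s, x s) : ℝ × (Fin n → ℝ)) - q
        = (s - t) • ((1:ℝ), (0 : Fin n → ℝ)) + ((0:ℝ), x s - x t) := by
      simp [Prod.ext_iff, hqdef]
    have hDvsplit : Dv (((s, x s) : ℝ × (Fin n → ℝ)) - q)
        = (s - t) * Dv (1, 0) + ℓ (x s - x t) := by
      rw [hdecomp, map_add, _root_.map_smul, hℓ, smul_eq_mul]
    -- integrability of the composed integrand
    have hFits : IntervalIntegrable F volume t s := hFi t htIcc s hsIcc
    have hℓFint : IntervalIntegrable (fun z => ℓ (F z)) volume t s := by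
      rw [intervalIntegrable_iff] at hFits ⊢
      exact ℓ.integrable_comp hFits
    have hHint : IntervalIntegrable H volume t s :=
      (hHcont.mono fun z hz => ⟨ht.1.trans hz.1, hz.2.trans hsT⟩ :
        ContinuousOn H (Icc t s)).intervalIntegrable_of_Icc hst.le
    have hℓint : ℓ (x s - x t) = ∫ z in t..s, ℓ (F z) := by
      rw [hxd, ℓ.intervalIntegral_comp_comm hFits]
    -- pointwise comparison with `H`
    have hptw : ∀ z ∈ Icc t s, ℓ (F z) ≤ H z := by
      intro z hz
      rw [hFdec z, map_add, map_sum, hHdef]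
      refine add_le_add_right (Finset.sum_le_sum fun j _ => ?_) _
      rw [_root_.map_smul, smul_eq_mul]
      refine (le_abs_self _).trans ?_
      rw [abs_mul]
      refine mul_le_of_le_one_left (abs_nonneg _) ?_
      exact abs_le.2 ⟨(huU (z, x z) j).1, (huU (z, x z) j).2⟩
    have hint1 : (∫ z in t..s, ℓ (F z)) ≤ ∫ z in t..s, H z :=
      intervalIntegral.integral_mono_on hst.le hℓFint hHint hptw
    have hint2 : (∫ z in t..s, H z) ≤ (s - t) * (H t + r / 3) := by
      have : (∫ z in t..s, H z) ≤ ∫ _z in t..s, (H t + r / 3) :=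
        intervalIntegral.integral_mono_on hst.le hHint
          intervalIntegrable_const (fun z hz => hs2 z hz)
      rwa [intervalIntegral.integral_const, smul_eq_mul] at this
    -- assemble
    have hεC : r / (3 * C) * (C * (s - t)) = r / 3 * (s - t) := by
      field_simp
    have herr : v (s, x s) - v q - Dv (((s, x s) : ℝ × (Fin n → ℝ)) - q)
        ≤ r / 3 * (s - t) := by
      refine (le_abs_self _).trans ?_
      rw [← Real.norm_eq_abs]
      refine hs1.trans ?_
      rw [← hεC]
      exact mul_le_mul_of_nonneg_left hnorm hε.le
    have hφq : φ t = v q := rfl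
    calc φ s - φ t
        = (v (s, x s) - v q - Dv (((s, x s) : ℝ × (Fin n → ℝ)) - q))
          + ((s - t) * Dv (1, 0) + ℓ (x s - x t)) := by
          rw [hDvsplit.symm, hφq]; ring
      _ ≤ r / 3 * (s - t) + ((s - t) * Dv (1, 0) + (s - t) * (H t + r / 3)) := by
          refine add_le_add herr (add_le_add_right ?_ _)
          rw [hℓint]
          exact hint1.trans hint2
      _ = (s - t) * (r / 3 + Dv (1, 0) + (H t + r / 3)) := by ring
      _ ≤ (s - t) * r := by
          have h9 : Dv (1, 0) + H t ≤ 0 := hD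
          have h10 := add_le_add_right h9 (r / 3 + r / 3)
          refine mul_le_mul_of_nonneg_left ?_ (by linarith)
          calc r / 3 + Dv (1, 0) + (H t + r / 3)
              = r / 3 + r / 3 + (Dv (1, 0) + H t) := by ring
            _ ≤ r / 3 + r / 3 + 0 := h10
            _ ≤ r := by linarith
      _ = r * (s - t) := mul_comm _ _
  -- monotonicity from the slope estimate
  have mono : ∀ a ∈ Icc (0:ℝ) T, ∀ b ∈ Icc (0:ℝ) T, a ≤ b → φ b ≤ φ a := by
    intro a ha b hb hab
    rcases eq_or_lt_of_le hab with rfl | hab'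
    · exact le_rfl
    have hφab : ContinuousOn φ (Icc a b) := hφc.mono (Icc_subset_Icc ha.1 hb.2)
    have := image_le_of_liminf_slope_right_le_deriv_boundary (B := fun _ => φ a)
      (B' := fun _ => 0) hφab le_rfl continuousOn_const
      (fun z _ => hasDerivWithinAt_const z _ (φ a)) ?_ (right_mem_Icc.2 hab)
    · exact this
    · intro z hz r hr
      have hz' : z ∈ Ico (0:ℝ) T := ⟨ha.1.trans hz.1, lt_of_lt_of_le hz.2 hb.2⟩
      have hr' : (0:ℝ) < r := hr
      have h := key z hz' (r / 2) (by linarith)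
      refine Eventually.frequently ?_
      filter_upwards [h, self_mem_nhdsWithin] with s hs hs'
      have hzs : z < s := hs'
      rw [slope_def_field, div_lt_iff₀ (by linarith)]
      nlinarith [sub_pos.2 hzs]
  refine ⟨fun a ha b hb hab => mono a ha b hb hab, ?_⟩
  exact mono 0 (left_mem_Icc.2 hT.le) T (right_mem_Icc.2 hT.le) hT.le
end
end

section
/- Suppose v ∈ C¹([0,T]×ℝⁿ), w : ℝⁿ → ℝ continuous, and continuous p₁,…,p_m : [0,T]×ℝⁿ → ℝ satisfy: (i) (L_f v)(t,x) + Σ_{i=1}^m p_i(t,x) ≤ 0 for all (t,x) ∈ [0,T]×X; (ii) p_i(t,x) ≥ |[L_g v]_i(t,x)| on [0,T]×X for each i; (iii) w(x) ≥ v(0,x) + 1 for all x ∈ X; (iv) v(T,x) ≥ 0 for all x ∈ X_T. Then for every measurable feedback u : [0,T]×ℝⁿ → U and every solution x(·) with control u such that x(t) ∈ X for all t ∈ [0,T] and x(T) ∈ X_T, one has w(x(0)) ≥ 1. -/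
open MeasureTheory Set Filter

noncomputable section

set_option maxHeartbeats 1600000 in
theorem dual_feasible_implies_w_ge_one
    (n m : ℕ) (T : ℝ) (hT : 0 < T)
    (f : ℝ × (Fin n → ℝ) → Fin n → ℝ) (g : ℝ × (Fin n → ℝ) → Fin n → Fin m → ℝ)
    (hf : Continuous f) (hg : Continuous g)
    (X : Set (Fin n → ℝ)) (hX : IsCompact X)
    (XT : Set (Fin n → ℝ)) (hXT : IsCompact XT) (hXTsub : XT ⊆ X)
    (v : ℝ × (Fin n → ℝ) → ℝ) (hv : ContDiff ℝ 1 v)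
    (w : (Fin n → ℝ) → ℝ) (hw : Continuous w)
    (p : Fin m → ℝ × (Fin n → ℝ) → ℝ) (hp : ∀ i, Continuous (p i))
    (hineq1 : ∀ q ∈ Icc (0:ℝ) T ×ˢ X, Lf n f v q + ∑ i, p i q ≤ 0)
    (hineq2 : ∀ q ∈ Icc (0:ℝ) T ×ˢ X, ∀ i, |Lg n m g v q i| ≤ p i q)
    (hineq3 : ∀ y ∈ X, v (0, y) + 1 ≤ w y)
    (hineq4 : ∀ y ∈ XT, 0 ≤ v (T, y))
    (u : ℝ × (Fin n → ℝ) → Fin m → ℝ) (hu : Measurable u)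
    (huU : ∀ q j, u q j ∈ Icc (-1:ℝ) 1)
    (x : ℝ → Fin n → ℝ) (hx : IsSolution n m T f g u x)
    (hxX : ∀ t ∈ Icc (0:ℝ) T, x t ∈ X) (hxT : x T ∈ XT) :
    1 ≤ w (x 0) := by
  obtain ⟨hxc, hxi, hxeq⟩ := hx
  set F : ℝ → Fin n → ℝ :=
    (fun s => (fun i => f (s, x s) i + ∑ j, g (s, x s) i j * u (s, x s) j)) with hF
  -- bounds on f and g on the compact set
  obtain ⟨Cf, hCf⟩ := ((isCompact_Icc (a := (0:ℝ)) (b := T)).prod hX).exists_bound_of_continuousOn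
    hf.continuousOn
  obtain ⟨Cg, hCg⟩ := ((isCompact_Icc (a := (0:ℝ)) (b := T)).prod hX).exists_bound_of_continuousOn
    hg.continuousOn
  set C : ℝ := max Cf 0 + m * max Cg 0 with hCdef
  have hCf0 : (0:ℝ) ≤ max Cf 0 := le_max_right _ _
  have hCg0 : (0:ℝ) ≤ max Cg 0 := le_max_right _ _
  have hC0 : 0 ≤ C := by positivity
  have hmem : ∀ s ∈ Icc (0:ℝ) T, ((s, x s) : ℝ × (Fin n → ℝ)) ∈ Icc (0:ℝ) T ×ˢ X :=
    fun s hs => ⟨hs, hxX s hs⟩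
  have hFC : ∀ s ∈ Icc (0:ℝ) T, ‖F s‖ ≤ C := by
    intro s hs
    rw [pi_norm_le_iff_of_nonneg hC0]
    intro i
    have h1 : ‖f (s, x s) i‖ ≤ max Cf 0 :=
      le_trans (le_trans (norm_le_pi_norm _ i) (hCf _ (hmem s hs))) (le_max_left _ _)
    have h2 : ∀ j, ‖g (s, x s) i j * u (s, x s) j‖ ≤ max Cg 0 := by
      intro j
      rw [norm_mul]
      have hg1 : ‖g (s, x s) i j‖ ≤ max Cg 0 :=
        le_trans (le_trans (norm_le_pi_norm _ j)
          (le_trans (norm_le_pi_norm _ i) (hCg _ (hmem s hs)))) (le_max_left _ _)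
      have hu1 : ‖u (s, x s) j‖ ≤ 1 := by
        rw [Real.norm_eq_abs]; exact abs_le.2 (huU _ j)
      calc ‖g (s, x s) i j‖ * ‖u (s, x s) j‖ ≤ max Cg 0 * 1 :=
            mul_le_mul hg1 hu1 (norm_nonneg _) hCg0
        _ = max Cg 0 := mul_one _
    have habs : ‖∑ j, g (s, x s) i j * u (s, x s) j‖ ≤ (m : ℝ) * max Cg 0 := by
      refine le_trans (norm_sum_le _ _) ?_
      calc (∑ j, ‖g (s, x s) i j * u (s, x s) j‖) ≤ ∑ _j : Fin m, max Cg 0 :=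
            Finset.sum_le_sum fun j _ => h2 j
        _ = (m : ℝ) * max Cg 0 := by
            simp [Finset.sum_const, Finset.card_univ, nsmul_eq_mul]
    have hrfl : ‖F s i‖ = ‖f (s, x s) i + ∑ j, g (s, x s) i j * u (s, x s) j‖ := rfl
    rw [hrfl]
    calc ‖f (s, x s) i + ∑ j, g (s, x s) i j * u (s, x s) j‖
        ≤ ‖f (s, x s) i‖ + ‖∑ j, g (s, x s) i j * u (s, x s) j‖ := norm_add_le _ _
      _ ≤ max Cf 0 + (m : ℝ) * max Cg 0 := add_le_add h1 habs
  have hIccuIcc : Icc (0:ℝ) T = uIcc 0 T := (uIcc_of_le hT.le).symm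
  have hFsub : ∀ a b, a ∈ Icc (0:ℝ) T → b ∈ Icc (0:ℝ) T → IntervalIntegrable F volume a b := by
    intro a b ha hb
    exact hxi.mono_set (uIcc_subset_uIcc (hIccuIcc ▸ ha) (hIccuIcc ▸ hb))
  have h0mem : (0:ℝ) ∈ Icc (0:ℝ) T := ⟨le_rfl, hT.le⟩
  have hxdiff : ∀ a b, a ∈ Icc (0:ℝ) T → b ∈ Icc (0:ℝ) T →
      x b - x a = ∫ s in a..b, F s := by
    intro a b ha hb
    rw [hxeq b hb, hxeq a ha, add_sub_add_left_eq_sub]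
    exact intervalIntegral.integral_interval_sub_left (hFsub 0 b h0mem hb)
      (hFsub 0 a h0mem ha)
  have hxnorm : ∀ a b, a ∈ Icc (0:ℝ) T → b ∈ Icc (0:ℝ) T → a ≤ b →
      ‖x b - x a‖ ≤ C * (b - a) := by
    intro a b ha hb hab
    rw [hxdiff a b ha hb]
    have hb1 : ∀ s ∈ Set.uIoc a b, ‖F s‖ ≤ C := by
      intro s hs
      rw [uIoc_of_le hab] at hs
      exact hFC s ⟨le_trans ha.1 hs.1.le, le_trans hs.2 hb.2⟩
    have := intervalIntegral.norm_integral_le_of_norm_le_const hb1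
    rwa [abs_of_nonneg (sub_nonneg.2 hab)] at this
  set y : ℝ → ℝ × (Fin n → ℝ) := fun s => (s, x s) with hy
  have hyc : ContinuousOn y (Icc 0 T) := continuousOn_id.prodMk hxc
  set φ : ℝ → ℝ := fun s => v (y s) with hφ
  have hφc : ContinuousOn φ (Icc 0 T) := hv.continuous.comp_continuousOn hyc
  have key : ∀ z ∈ Icc (0:ℝ) T, φ z ≤ φ 0 := by
    have main := le_gronwallBound_of_liminf_deriv_right_le (f := φ) (f' := fun _ => (0:ℝ))
      (δ := φ 0) (K := 0) (ε := 0) (a := 0) (b := T) hφc ?_ le_rfl (fun s _ => by simp)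
    · intro z hz
      have h := main z hz
      rw [gronwallBound_K0] at h
      simpa using h
    intro t ht r hr
    have hr' : (0:ℝ) < r := hr
    have htIcc : t ∈ Icc (0:ℝ) T := Ico_subset_Icc_self ht
    set q : ℝ × (Fin n → ℝ) := y t with hq
    have hqmem : q ∈ Icc (0:ℝ) T ×ˢ X := hmem t htIcc
    set D : (ℝ × (Fin n → ℝ)) →L[ℝ] ℝ := fderiv ℝ v q with hD
    have hvd : HasFDerivAt v D q := (hv.differentiable one_ne_zero q).hasFDerivAt
    have hC1 : (0:ℝ) < 1 + C := by linarith
    set ε₁ : ℝ := r / (3 * (1 + C)) with hε₁def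
    have hε₁ : 0 < ε₁ := div_pos hr' (by nlinarith)
    set εs : ℝ := r / (3 * ((m : ℝ) + 1)) with hεsdef
    have hεs : 0 < εs := div_pos hr' (by positivity)
    have ho : ∀ᶠ pt in nhds q, ‖v pt - v q - D (pt - q)‖ ≤ ε₁ * ‖pt - q‖ :=
      hvd.isLittleO.def hε₁
    have hyt : Tendsto y (nhdsWithin t (Icc 0 T)) (nhds q) := hyc t htIcc
    have hoy : ∀ᶠ z in nhdsWithin t (Icc 0 T),
        ‖v (y z) - v q - D (y z - q)‖ ≤ ε₁ * ‖y z - q‖ := hyt.eventually ho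
    set A : ℝ → ℝ := fun s => D (0, f (y s)) with hA
    set B : ℝ → Fin m → ℝ := fun s j => D (0, fun i => g (y s) i j) with hB
    have hAt : Tendsto A (nhdsWithin t (Icc 0 T)) (nhds (A t)) := by
      have hcont : Continuous fun pt : ℝ × (Fin n → ℝ) => D (((0:ℝ), f pt)) :=
        D.continuous.comp (continuous_const.prodMk hf)
      exact (hcont.tendsto q).comp hyt
    have hBt : Tendsto B (nhdsWithin t (Icc 0 T)) (nhds (B t)) := by
      have hcont : Continuous fun pt : ℝ × (Fin n → ℝ) =>
          (fun j => D ((0:ℝ), fun i => g pt i j)) := by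
        refine continuous_pi fun j => D.continuous.comp (continuous_const.prodMk ?_)
        exact continuous_pi fun i => (continuous_apply j).comp ((continuous_apply i).comp hg)
      exact (hcont.tendsto q).comp hyt
    obtain ⟨δ₁, hδ₁, hA1⟩ := Metric.tendsto_nhdsWithin_nhds.1 hAt εs hεs
    obtain ⟨δ₂, hδ₂, hB1⟩ := Metric.tendsto_nhdsWithin_nhds.1 hBt εs hεs
    have hIocmem : Ioc t T ∈ nhdsWithin t (Ioi t) := Ioc_mem_nhdsGT_of_mem ⟨le_rfl, ht.2⟩
    have hIoomem : Ioo t (t + min δ₁ δ₂) ∈ nhdsWithin t (Ioi t) :=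
      Ioo_mem_nhdsGT_of_mem ⟨le_rfl, lt_add_of_pos_right t (lt_min hδ₁ hδ₂)⟩
    have hle : nhdsWithin t (Ioi t) ≤ nhdsWithin t (Icc (0:ℝ) T) :=
      nhdsWithin_le_iff.2 (mem_of_superset hIocmem
        (fun z hz => ⟨le_trans htIcc.1 hz.1.le, hz.2⟩))
    refine Filter.Eventually.frequently ?_
    filter_upwards [hIocmem, hIoomem, hle hoy] with z hz1 hz2 ho2
    have htz : 0 < z - t := sub_pos.2 hz1.1
    have hzIcc : z ∈ Icc (0:ℝ) T := ⟨le_trans htIcc.1 hz1.1.le, hz1.2⟩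
    have hint : IntervalIntegrable F volume t z := hFsub t z htIcc hzIcc
    have hdiffx : x z - x t = ∫ s in t..z, F s := hxdiff t z htIcc hzIcc
    have hyznorm : ‖y z - q‖ ≤ (1 + C) * (z - t) := by
      rw [norm_prod_le_iff]
      constructor
      · have : (y z - q).1 = z - t := rfl
        rw [this, Real.norm_eq_abs, abs_of_nonneg htz.le]
        nlinarith
      · have : (y z - q).2 = x z - x t := rfl
        rw [this]
        have := hxnorm t z htIcc hzIcc hz1.1.le
        nlinarith
    set L : (Fin n → ℝ) →L[ℝ] ℝ := D.comp (ContinuousLinearMap.inr ℝ ℝ (Fin n → ℝ)) with hL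
    have hLint : IntervalIntegrable (fun s => L (F s)) volume t z := by
      rw [intervalIntegrable_iff] at hint ⊢
      exact L.integrable_comp hint
    have hLF : ∀ s, L (F s) = A s + ∑ j, u (y s) j * B s j := by
      intro s
      have hsplit : F s = f (y s) + ∑ j, u (y s) j • (fun i => g (y s) i j) := by
        funext i
        simp only [hF, Pi.add_apply, Finset.sum_apply, Pi.smul_apply, smul_eq_mul]
        congr 1
        exact Finset.sum_congr rfl fun j _ => mul_comm _ _
      rw [hsplit, map_add, map_sum]
      simp only [_root_.map_smul, smul_eq_mul]
      rfl
    have hbound : ∀ s ∈ Icc t z,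
        L (F s) ≤ A t + (∑ j, |B t j|) + (m + 1) * εs := by
      intro s hs
      have hsIcc : s ∈ Icc (0:ℝ) T := ⟨le_trans htIcc.1 hs.1, le_trans hs.2 hzIcc.2⟩
      have hdist : dist s t < min δ₁ δ₂ := by
        rw [Real.dist_eq, abs_of_nonneg (sub_nonneg.2 hs.1)]
        have : z < t + min δ₁ δ₂ := hz2.2
        linarith [hs.2]
      have hAs : A s ≤ A t + εs := by
        have := hA1 hsIcc (lt_of_lt_of_le hdist (min_le_left _ _))
        rw [Real.dist_eq] at this
        have := abs_sub_lt_iff.1 this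
        linarith [this.1]
      have hBs : ∀ j, |B s j| ≤ |B t j| + εs := by
        intro j
        have hd := hB1 hsIcc (lt_of_lt_of_le hdist (min_le_right _ _))
        have hdj : dist (B s j) (B t j) ≤ dist (B s) (B t) := dist_le_pi_dist _ _ j
        have : |B s j - B t j| < εs := by
          rw [← Real.dist_eq]; exact lt_of_le_of_lt hdj hd
        calc |B s j| ≤ |B t j| + |B s j - B t j| := by
              have := abs_sub_abs_le_abs_sub (B s j) (B t j)
              linarith [this]
          _ ≤ |B t j| + εs := by linarith
      rw [hLF s]
      have hsum : (∑ j, u (y s) j * B s j) ≤ ∑ j, (|B t j| + εs) := by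
        refine Finset.sum_le_sum fun j _ => ?_
        have h1 : u (y s) j * B s j ≤ |u (y s) j * B s j| := le_abs_self _
        have h2 : |u (y s) j * B s j| = |u (y s) j| * |B s j| := abs_mul _ _
        have h3 : |u (y s) j| ≤ 1 := abs_le.2 (huU _ j)
        have h4 : |u (y s) j| * |B s j| ≤ 1 * |B s j| :=
          mul_le_mul_of_nonneg_right h3 (abs_nonneg _)
        have := hBs j
        nlinarith [abs_nonneg (B s j)]
      have hsum2 : (∑ j, (|B t j| + εs)) = (∑ j, |B t j|) + (m : ℝ) * εs := by
        rw [Finset.sum_add_distrib]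
        simp [Finset.sum_const, Finset.card_univ, nsmul_eq_mul]
      nlinarith [hsum, hAs]
    have hIbound : (∫ s in t..z, L (F s)) ≤
        (z - t) * (A t + (∑ j, |B t j|) + (m + 1) * εs) := by
      have hmono := intervalIntegral.integral_mono_on hz1.1.le hLint
        intervalIntegrable_const hbound
      rwa [intervalIntegral.integral_const, smul_eq_mul] at hmono
    have hdualbound : D (1, (0 : Fin n → ℝ)) + (A t + ∑ j, |B t j|) ≤ 0 := by
      have hLfq : Lf n f v q = D (1, (0 : Fin n → ℝ)) + A t := by
        have h1 : Lf n f v q = D (1, f q) := rfl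
        have h2 : ((1:ℝ), (0 : Fin n → ℝ)) + ((0:ℝ), f q) = ((1:ℝ), f q) := by
          simp [Prod.ext_iff]
        have h3 : A t = D ((0:ℝ), f q) := rfl
        rw [h1, ← h2, map_add, h3]
      have hLgq : ∀ j, |B t j| ≤ p j q := by
        intro j
        have hbj : B t j = Lg n m g v q j := rfl
        rw [hbj]
        exact hineq2 q hqmem j
      have hsum : (∑ j, |B t j|) ≤ ∑ j, p j q := Finset.sum_le_sum fun j _ => hLgq j
      have := hineq1 q hqmem
      rw [hLfq] at this
      linarith
    -- assemble
    have hvineq : v (y z) - v q ≤ D (y z - q) + ε₁ * ‖y z - q‖ := by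
      have h1 := le_abs_self (v (y z) - v q - D (y z - q))
      rw [← Real.norm_eq_abs] at h1
      linarith [ho2, h1.trans ho2]
    have hdec : D (y z - q) = (z - t) * D (1, (0 : Fin n → ℝ)) + ∫ s in t..z, L (F s) := by
      have h1 : y z - q = (z - t) • ((1:ℝ), (0 : Fin n → ℝ)) + (((0:ℝ), x z - x t)) := by
        have : y z - q = ((z - t : ℝ), x z - x t) := rfl
        rw [this, Prod.smul_mk, Prod.mk_add_mk]
        simp
      rw [h1, map_add, _root_.map_smul, smul_eq_mul]
      congr 1
      have h2 : D ((0:ℝ), x z - x t) = L (x z - x t) := rfl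
      rw [h2, hdiffx]
      exact (ContinuousLinearMap.intervalIntegral_comp_comm L hint).symm
    have he1 : ε₁ * ‖y z - q‖ ≤ r / 3 * (z - t) := by
      have h1 : ε₁ * ‖y z - q‖ ≤ ε₁ * ((1 + C) * (z - t)) :=
        mul_le_mul_of_nonneg_left hyznorm hε₁.le
      have h2 : ε₁ * ((1 + C) * (z - t)) = r / 3 * (z - t) := by
        have hne : (1 + C) ≠ 0 := by positivity
        rw [hε₁def]
        field_simp
      calc ε₁ * ‖y z - q‖ ≤ ε₁ * ((1 + C) * (z - t)) := h1
        _ = r / 3 * (z - t) := h2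
    have heps : ((m : ℝ) + 1) * εs = r / 3 := by
      rw [hεsdef]
      have : ((m : ℝ) + 1) ≠ 0 := by positivity
      field_simp
    have hslope : φ z - φ t ≤ (z - t) * (2 * r / 3) := by
      have h1 : φ z - φ t = v (y z) - v q := rfl
      rw [h1]
      have h2 : v (y z) - v q ≤
          (z - t) * D (1, (0 : Fin n → ℝ)) + (∫ s in t..z, L (F s)) + r / 3 * (z - t) := by
        rw [← hdec]; linarith [hvineq, he1]
      have h3 : (∫ s in t..z, L (F s)) ≤
          (z - t) * (A t + (∑ j, |B t j|) + r / 3) := by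
        rw [← heps]; exact hIbound
      nlinarith [hdualbound, htz]
    have hfinal : (z - t)⁻¹ * (φ z - φ t) ≤ 2 * r / 3 := by
      have h3 : (z - t)⁻¹ * (φ z - φ t) ≤ (z - t)⁻¹ * ((z - t) * (2 * r / 3)) :=
        mul_le_mul_of_nonneg_left hslope (inv_nonneg.2 htz.le)
      rwa [← mul_assoc, inv_mul_cancel₀ htz.ne', one_mul] at h3
    linarith
  have hφT : φ T ≤ φ 0 := key T ⟨hT.le, le_rfl⟩
  have h4 : (0:ℝ) ≤ v (T, x T) := hineq4 _ hxT
  have h3 := hineq3 (x 0) (hxX 0 h0mem)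
  have hφTval : φ T = v (T, x T) := rfl
  have hφ0val : φ 0 = v (0, x 0) := rfl
  rw [hφTval, hφ0val] at hφT
  linarith
end
end

section
/- Let (v, w, p) be feasible for the dual program D, i.e., v ∈ C¹([0,T]×ℝⁿ), w : ℝⁿ → ℝ continuous with w ≥ 0 on X, continuous p₁,…,p_m with (L_f v) + Σ_{i=1}^m p_i ≤ 0 and p_i ≥ |[L_g v]_i| on [0,T]×X, w(x) ≥ v(0,x) + 1 for x ∈ X, and v(T,x) ≥ 0 for x ∈ X_T. Then for every measurable feedback u : [0,T]×ℝⁿ → U, the backward reachable set satisfies 𝒳(u) ⊆ {x ∈ ℝⁿ : w(x) ≥ 1}. -/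
open MeasureTheory Set Filter Topology

noncomputable section

/-- The backward reachable set `𝒳(u)` for feedback `u`. -/
def BRS (n m : ℕ) (T : ℝ) (f : ℝ × (Fin n → ℝ) → Fin n → ℝ)
    (g : ℝ × (Fin n → ℝ) → Fin n → Fin m → ℝ)
    (X XT : Set (Fin n → ℝ)) (u : ℝ × (Fin n → ℝ) → Fin m → ℝ) : Set (Fin n → ℝ) :=
  {x₀ | ∃ x : ℝ → Fin n → ℝ, IsSolution n m T f g u x ∧ x 0 = x₀ ∧
    (∀ t ∈ Icc (0:ℝ) T, x t ∈ X) ∧ x T ∈ XT}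

set_option maxHeartbeats 1000000 in
theorem BRS_subset_superlevel_set_of_dual_feasible
    (n m : ℕ) (T : ℝ) (hT : 0 < T)
    (f : ℝ × (Fin n → ℝ) → Fin n → ℝ) (g : ℝ × (Fin n → ℝ) → Fin n → Fin m → ℝ)
    (hf : Continuous f) (hg : Continuous g)
    (X : Set (Fin n → ℝ)) (hX : IsCompact X)
    (XT : Set (Fin n → ℝ)) (hXT : IsCompact XT) (hXTsub : XT ⊆ X)
    (v : ℝ × (Fin n → ℝ) → ℝ) (hv : ContDiff ℝ 1 v)
    (w : (Fin n → ℝ) → ℝ) (hw : Continuous w) (hwpos : ∀ y ∈ X, 0 ≤ w y)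
    (p : Fin m → ℝ × (Fin n → ℝ) → ℝ) (hp : ∀ i, Continuous (p i))
    (hineq1 : ∀ q ∈ Icc (0:ℝ) T ×ˢ X, Lf n f v q + ∑ i, p i q ≤ 0)
    (hineq2 : ∀ q ∈ Icc (0:ℝ) T ×ˢ X, ∀ i, |Lg n m g v q i| ≤ p i q)
    (hineq3 : ∀ y ∈ X, v (0, y) + 1 ≤ w y)
    (hineq4 : ∀ y ∈ XT, 0 ≤ v (T, y))
    (u : ℝ × (Fin n → ℝ) → Fin m → ℝ) (hu : Measurable u)
    (huU : ∀ q j, u q j ∈ Icc (-1:ℝ) 1) :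
    BRS n m T f g X XT u ⊆ {y | 1 ≤ w y} := by
  rintro x₀ ⟨x, ⟨hxc, hFint, hxeq⟩, hx0, hxX, hxT⟩
  set F : ℝ → Fin n → ℝ :=
    fun s => (fun i => f (s, x s) i + ∑ j, g (s, x s) i j * u (s, x s) j) with hFdef
  -- the compact set of states visited
  have hmemK : ∀ s ∈ Icc (0:ℝ) T, (s, x s) ∈ Icc (0:ℝ) T ×ˢ X := fun s hs => ⟨hs, hxX s hs⟩
  -- a bound on F on [0,T]
  obtain ⟨Cf, hCf⟩ := (isCompact_Icc.prod hX).exists_bound_of_continuousOn hf.continuousOn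
  obtain ⟨Cg, hCg⟩ := (isCompact_Icc.prod hX).exists_bound_of_continuousOn hg.continuousOn
  set M : ℝ := max Cf 0 + m * max Cg 0 with hMdef
  have hM0 : 0 ≤ M := by positivity
  have hFbound : ∀ s ∈ Icc (0:ℝ) T, ‖F s‖ ≤ M := by
    intro s hs
    have hq := hmemK s hs
    rw [pi_norm_le_iff_of_nonneg hM0]
    intro i
    have h1 : |f (s, x s) i| ≤ max Cf 0 :=
      le_trans (norm_le_pi_norm (f (s, x s)) i) (le_max_of_le_left (hCf _ hq))
    have h2 : ∀ j, |g (s, x s) i j * u (s, x s) j| ≤ max Cg 0 := by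
      intro j
      rw [abs_mul]
      have hgij : |g (s, x s) i j| ≤ max Cg 0 :=
        le_trans (norm_le_pi_norm (g (s, x s) i) j)
          (le_trans (norm_le_pi_norm (g (s, x s)) i) (le_max_of_le_left (hCg _ hq)))
      have huj : |u (s, x s) j| ≤ 1 := abs_le.2 ⟨(huU _ j).1, (huU _ j).2⟩
      calc |g (s, x s) i j| * |u (s, x s) j| ≤ max Cg 0 * 1 :=
            mul_le_mul hgij huj (abs_nonneg _) (le_max_right _ _)
        _ = max Cg 0 := mul_one _
    calc ‖F s i‖ = |f (s, x s) i + ∑ j, g (s, x s) i j * u (s, x s) j| := rfl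
      _ ≤ |f (s, x s) i| + |∑ j, g (s, x s) i j * u (s, x s) j| := abs_add_le _ _
      _ ≤ max Cf 0 + ∑ j, |g (s, x s) i j * u (s, x s) j| :=
          add_le_add h1 (Finset.abs_sum_le_sum_abs _ _)
      _ ≤ max Cf 0 + ∑ _j : Fin m, max Cg 0 :=
          add_le_add (le_refl _) (Finset.sum_le_sum fun j _ => h2 j)
      _ = M := by simp [hMdef, mul_comm]
  -- restricted integrability
  have hFi : ∀ c ∈ Icc (0:ℝ) T, ∀ z ∈ Icc (0:ℝ) T, IntervalIntegrable F volume c z := by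
    intro c hc z hz
    refine hFint.mono_set ?_
    rw [uIcc_of_le (le_trans hc.1 hc.2)]
    exact uIcc_subset_Icc hc hz
  -- increments of x as integrals
  have hxsub : ∀ c ∈ Icc (0:ℝ) T, ∀ z ∈ Icc (0:ℝ) T, x z - x c = ∫ s in c..z, F s := by
    intro c hc z hz
    have h1 := hxeq z hz
    have h2 := hxeq c hc
    rw [h1, h2]
    rw [add_sub_add_left_eq_sub]
    exact intervalIntegral.integral_interval_sub_left (hFi 0 (by constructor <;> simp [hT.le]) z hz)
      (hFi 0 (by constructor <;> simp [hT.le]) c hc)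
  have hxLip : ∀ c ∈ Icc (0:ℝ) T, ∀ z ∈ Icc (0:ℝ) T, c ≤ z → ‖x z - x c‖ ≤ M * (z - c) := by
    intro c hc z hz hcz
    rw [hxsub c hc z hz]
    have := intervalIntegral.norm_integral_le_of_norm_le_const
      (f := F) (a := c) (b := z) (C := M) ?_
    · rwa [abs_of_nonneg (by linarith)] at this
    · intro s hs
      rw [uIoc_of_le hcz] at hs
      exact hFbound s ⟨le_trans hc.1 hs.1.le, le_trans hs.2 hz.2⟩
  -- derivative of v
  set A : ℝ × (Fin n → ℝ) → (ℝ × (Fin n → ℝ)) →L[ℝ] ℝ := fun q => fderiv ℝ v q with hAdef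
  have hAcont : Continuous A := hv.continuous_fderiv one_ne_zero
  have hvd : Differentiable ℝ v := hv.differentiable one_ne_zero
  -- pointwise sign condition along the trajectory
  have hD0 : ∀ s ∈ Icc (0:ℝ) T, A (s, x s) (1, F s) ≤ 0 := by
    intro s hs
    have hq := hmemK s hs
    have hdecomp : ((1:ℝ), F s) =
        ((1:ℝ), f (s, x s)) + ∑ j, u (s, x s) j • ((0:ℝ), fun i => g (s, x s) i j) := by
      rw [Prod.ext_iff]
      constructor
      · simp [Prod.fst_sum]
      · funext i
        simp [hFdef, Prod.snd_sum, Finset.sum_apply, mul_comm]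
    have : A (s, x s) (1, F s) =
        Lf n f v (s, x s) + ∑ j, u (s, x s) j * Lg n m g v (s, x s) j := by
      rw [hdecomp, map_add, _root_.map_sum]
      simp only [_root_.map_smul, smul_eq_mul]
      rfl
    rw [this]
    have hle : ∀ j, u (s, x s) j * Lg n m g v (s, x s) j ≤ p j (s, x s) := by
      intro j
      calc u (s, x s) j * Lg n m g v (s, x s) j
          ≤ |u (s, x s) j * Lg n m g v (s, x s) j| := le_abs_self _
        _ = |u (s, x s) j| * |Lg n m g v (s, x s) j| := abs_mul _ _
        _ ≤ 1 * |Lg n m g v (s, x s) j| :=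
            mul_le_mul_of_nonneg_right (abs_le.2 ⟨(huU _ j).1, (huU _ j).2⟩) (abs_nonneg _)
        _ = |Lg n m g v (s, x s) j| := one_mul _
        _ ≤ p j (s, x s) := hineq2 _ hq j
    calc Lf n f v (s, x s) + ∑ j, u (s, x s) j * Lg n m g v (s, x s) j
        ≤ Lf n f v (s, x s) + ∑ j, p j (s, x s) :=
          add_le_add (le_refl _) (Finset.sum_le_sum fun j _ => hle j)
      _ ≤ 0 := hineq1 _ hq
  -- the value function along the trajectory
  set φ : ℝ → ℝ := fun t => v (t, x t) with hφdef
  have hφcont : ContinuousOn φ (Icc 0 T) :=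
    hv.continuous.comp_continuousOn (continuousOn_id.prodMk hxc)
  -- the key local slope estimate
  have key : ∀ c ∈ Ico (0:ℝ) T, ∀ r : ℝ, (0:ℝ) < r → ∃ᶠ z in 𝓝[>] c, slope φ c z < r := by
    intro c hc r hr
    have hcI : c ∈ Icc (0:ℝ) T := ⟨hc.1, hc.2.le⟩
    set η : ℝ := r / 4 / (M + 1) with hηdef
    have hη0 : 0 < η := by positivity
    -- continuity of A at (c, x c)
    obtain ⟨ρ', hρ'0, hρ'⟩ := Metric.continuousAt_iff.1 (hAcont.continuousAt
      (x := ((c : ℝ), x c))) η hη0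
    set ρ : ℝ := ρ' / 2 with hρdef
    have hρ0 : 0 < ρ := by positivity
    have hball : ∀ q ∈ Metric.closedBall ((c : ℝ), x c) ρ, ‖A q - A (c, x c)‖ < η := by
      intro q hq
      rw [← dist_eq_norm]
      exact hρ' (lt_of_le_of_lt (Metric.mem_closedBall.1 hq) (by linarith))
    set δ : ℝ := min (ρ / (M + 1)) (T - c) with hδdef
    have hδ0 : 0 < δ := lt_min (by positivity) (by linarith [hc.2])
    have hδρ : δ * (M + 1) ≤ ρ := by
      have h1 : δ ≤ ρ / (M + 1) := min_le_left _ _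
      calc δ * (M + 1) ≤ ρ / (M + 1) * (M + 1) :=
            mul_le_mul_of_nonneg_right h1 (by linarith)
        _ = ρ := div_mul_cancel₀ _ (by linarith)
    refine Eventually.frequently ?_
    filter_upwards [Ioo_mem_nhdsGT_of_mem (Set.left_mem_Ico.2 (by linarith : c < c + δ))] with z hz
    have hcz : c < z := hz.1
    have hzI : z ∈ Icc (0:ℝ) T := ⟨le_trans hc.1 hcz.le, by
      have := hz.2
      have : z < c + (T - c) := lt_of_lt_of_le this (by linarith [min_le_right (ρ / (M + 1)) (T - c)])
      linarith⟩
    -- all visited points stay in the ball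
    have hinball : ∀ s ∈ Icc c z, ((s : ℝ), x s) ∈ Metric.closedBall ((c : ℝ), x c) ρ := by
      intro s hs
      have hsI : s ∈ Icc (0:ℝ) T := ⟨le_trans hc.1 hs.1, le_trans hs.2 hzI.2⟩
      rw [Metric.mem_closedBall, Prod.dist_eq]
      have hsc : s - c ≤ δ := by
        have := hs.2
        have := hz.2
        linarith
      have h1 : dist s c ≤ ρ := by
        rw [Real.dist_eq, abs_of_nonneg (by linarith [hs.1] : (0:ℝ) ≤ s - c)]
        calc s - c ≤ δ := hsc
          _ ≤ δ * (M + 1) := le_mul_of_one_le_right hδ0.le (by linarith)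
          _ ≤ ρ := hδρ
      have h2 : dist (x s) (x c) ≤ ρ := by
        rw [dist_eq_norm]
        calc ‖x s - x c‖ ≤ M * (s - c) := hxLip c hcI s hsI hs.1
          _ ≤ M * δ := mul_le_mul_of_nonneg_left hsc hM0
          _ ≤ δ * (M + 1) := by nlinarith [hδ0.le]
          _ ≤ ρ := hδρ
      exact max_le h1 h2
    -- mean value estimate
    have hmv : ‖v (z, x z) - v (c, x c) - (A (c, x c)) ((z, x z) - (c, x c))‖
        ≤ η * ‖((z : ℝ), x z) - ((c : ℝ), x c)‖ := by
      refine Convex.norm_image_sub_le_of_norm_fderiv_le' (fun q _ => hvd q)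
        (fun q hq => (hball q hq).le) (convex_closedBall _ _) ?_ ?_
      · exact Metric.mem_closedBall_self hρ0.le
      · exact hinball z ⟨hcz.le, le_refl z⟩
    have hΔ : ((z : ℝ), x z) - ((c : ℝ), x c) = ((z - c : ℝ), x z - x c) := rfl
    have hΔnorm : ‖((z : ℝ), x z) - ((c : ℝ), x c)‖ ≤ (M + 1) * (z - c) := by
      rw [hΔ, Prod.norm_def]
      refine max_le ?_ ?_
      · have h0 : (0:ℝ) ≤ z - c := by linarith
        rw [Real.norm_eq_abs, abs_of_nonneg h0]
        nlinarith
      · calc ‖x z - x c‖ ≤ M * (z - c) := hxLip c hcI z hzI hcz.le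
          _ ≤ (M + 1) * (z - c) := by nlinarith
    -- linear term as an integral
    set L : (Fin n → ℝ) →L[ℝ] ℝ :=
      (A (c, x c)).comp (ContinuousLinearMap.inr ℝ ℝ (Fin n → ℝ)) with hLdef
    have hFicz := hFi c hcI z hzI
    have hlin : (A (c, x c)) (((z : ℝ), x z) - ((c : ℝ), x c))
        = ∫ s in c..z, ((A (c, x c)) ((1:ℝ), (0 : Fin n → ℝ)) + L (F s)) := by
      rw [hΔ]
      have hsplit : ((z - c : ℝ), x z - x c)
          = (z - c) • ((1:ℝ), (0 : Fin n → ℝ)) + ((0:ℝ), x z - x c) := by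
        rw [Prod.ext_iff]; constructor <;> simp
      rw [hsplit, map_add, _root_.map_smul]
      rw [intervalIntegral.integral_add (intervalIntegrable_const)
        ⟨L.integrable_comp hFicz.1, L.integrable_comp hFicz.2⟩]
      rw [intervalIntegral.integral_const]
      congr 1
      have : ((0:ℝ), x z - x c) = ContinuousLinearMap.inr ℝ ℝ (Fin n → ℝ) (x z - x c) := rfl
      rw [this, ← ContinuousLinearMap.comp_apply, ← hLdef, hxsub c hcI z hzI]
      exact (L.intervalIntegral_comp_comm hFicz).symm
    -- pointwise bound on the integrand
    have hptwise : ∀ s ∈ Icc c z,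
        (A (c, x c)) ((1:ℝ), (0 : Fin n → ℝ)) + L (F s) ≤ η * (M + 1) := by
      intro s hs
      have hsI : s ∈ Icc (0:ℝ) T := ⟨le_trans hc.1 hs.1, le_trans hs.2 hzI.2⟩
      have hcomb : (A (c, x c)) ((1:ℝ), (0 : Fin n → ℝ)) + L (F s)
          = (A (c, x c)) ((1:ℝ), F s) := by
        rw [hLdef, ContinuousLinearMap.comp_apply, ← map_add]
        congr 1
        rw [Prod.ext_iff]; constructor <;> simp
      rw [hcomb]
      have hnorm1F : ‖((1:ℝ), F s)‖ ≤ M + 1 := by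
        rw [Prod.norm_def]
        refine max_le (by simp only [norm_one]; linarith) ?_
        calc ‖F s‖ ≤ M := hFbound s hsI
          _ ≤ M + 1 := by linarith
      have hdiff : (A (c, x c)) ((1:ℝ), F s)
          ≤ A (s, x s) ((1:ℝ), F s) + ‖A (c, x c) - A (s, x s)‖ * ‖((1:ℝ), F s)‖ := by
        have h1 : (A (c, x c)) ((1:ℝ), F s) - A (s, x s) ((1:ℝ), F s)
            = (A (c, x c) - A (s, x s)) ((1:ℝ), F s) := by simp
        have h2 : (A (c, x c) - A (s, x s)) ((1:ℝ), F s)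
            ≤ ‖A (c, x c) - A (s, x s)‖ * ‖((1:ℝ), F s)‖ :=
          le_trans (le_abs_self _) ((A (c, x c) - A (s, x s)).le_opNorm _)
        linarith [h1 ▸ h2]
      have hnear : ‖A (c, x c) - A (s, x s)‖ ≤ η := by
        rw [norm_sub_rev]
        exact (hball _ (hinball s hs)).le
      calc (A (c, x c)) ((1:ℝ), F s)
          ≤ A (s, x s) ((1:ℝ), F s) + ‖A (c, x c) - A (s, x s)‖ * ‖((1:ℝ), F s)‖ := hdiff
        _ ≤ 0 + η * (M + 1) := add_le_add (hD0 s hsI)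
            (mul_le_mul hnear hnorm1F (norm_nonneg _) hη0.le)
        _ = η * (M + 1) := zero_add _
    -- integral bound
    have hint : (∫ s in c..z, ((A (c, x c)) ((1:ℝ), (0 : Fin n → ℝ)) + L (F s)))
        ≤ η * (M + 1) * (z - c) := by
      have := intervalIntegral.integral_mono_on hcz.le
        ((intervalIntegrable_const).add
          ⟨L.integrable_comp hFicz.1, L.integrable_comp hFicz.2⟩)
        (intervalIntegrable_const (c := η * (M + 1))) hptwise
      rwa [intervalIntegral.integral_const, smul_eq_mul, mul_comm (z - c)] at this
    -- combining
    have hφineq : φ z - φ c ≤ r / 2 * (z - c) := by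
      have h1 : φ z - φ c - (A (c, x c)) (((z : ℝ), x z) - ((c : ℝ), x c))
          ≤ η * ((M + 1) * (z - c)) := by
        refine le_trans (le_trans (le_abs_self _) hmv) ?_
        exact mul_le_mul_of_nonneg_left hΔnorm hη0.le
      have h2 : (A (c, x c)) (((z : ℝ), x z) - ((c : ℝ), x c)) ≤ η * (M + 1) * (z - c) := by
        rw [hlin]; exact hint
      have hη4 : η * (M + 1) = r / 4 := div_mul_cancel₀ _ (ne_of_gt (by linarith : (0:ℝ) < M + 1))
      have e1 : η * ((M + 1) * (z - c)) = r / 4 * (z - c) := by rw [← mul_assoc, hη4]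
      have e2 : η * (M + 1) * (z - c) = r / 4 * (z - c) := by rw [hη4]
      rw [e1] at h1
      rw [e2] at h2
      linarith
    rw [slope_def_field, div_lt_iff₀ (by linarith : (0:ℝ) < z - c)]
    calc φ z - φ c ≤ r / 2 * (z - c) := hφineq
      _ < r * (z - c) := by nlinarith
  -- conclude φ T ≤ φ 0
  have hmono : φ T ≤ φ 0 := by
    have := image_le_of_liminf_slope_right_le_deriv_boundary (a := 0) (b := T)
      (B := fun _ => φ 0) (B' := fun _ => 0) hφcont (le_refl (φ 0)) continuousOn_const
      (fun c _ => hasDerivWithinAt_const c _ (φ 0)) key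
    exact this ⟨hT.le, le_refl T⟩
  -- conclude
  have h0 : 0 ≤ v (0, x 0) := le_trans (hineq4 _ hxT) hmono
  have hx0X : x 0 ∈ X := hxX 0 ⟨le_refl 0, hT.le⟩
  have := hineq3 _ hx0X
  simp only [Set.mem_setOf_eq]
  rw [← hx0]
  linarith
end
end

section
/- Let u : [0,T]×ℝⁿ → U be a measurable feedback and μ₀ a finite Borel measure on X (the initial measure). Suppose that for μ₀-almost every x₀ ∈ X, x(·|x₀) is a solution with control u satisfying x(0|x₀) = x₀ and x(t|x₀) ∈ X for all t ∈ [0,T], and that (t,x₀) ↦ x(t|x₀) is jointly Borel measurable. Define the final measure μ_T as the pushforward of μ₀ under x₀ ↦ x(T|x₀), and the average occupation measure μ on [0,T]×X by μ(A) = ∫_X μ_{x₀}(A) dμ₀(x₀), where μ_{x₀} is the pushforward of Lebesgue measure on [0,T] under t ↦ (t, x(t|x₀)). Then Liouville's equation holds: for every v ∈ C¹([0,T]×ℝⁿ), ∫ v(T,y) dμ_T(y) = ∫ v(0,x₀) dμ₀(x₀) + ∫_{[0,T]×X} [ (L_f v)(t,y) + Σ_{j=1}^m [L_g v]_j(t,y)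 u_j(t,y) ] dμ(t,y). -/
open MeasureTheory Set Filter Topology

noncomputable section

set_option maxHeartbeats 1000000 in
set_option synthInstance.maxHeartbeats 200000 in
lemma chain_ftc {E : Type*} [NormedAddCommGroup E] [NormedSpace ℝ E] [ProperSpace E]
    [CompleteSpace E] [MeasurableSpace E] [BorelSpace E] [SecondCountableTopology E]
    (Φ : ℝ → E) (hΦ : Integrable Φ) (c : E) (T : ℝ) (hT : 0 ≤ T)
    (v : E → ℝ) (hv : ContDiff ℝ 1 v) :
    v (c + ∫ s in (0:ℝ)..T, Φ s) =
      v c + ∫ t in (0:ℝ)..T, fderiv ℝ v (c + ∫ s in (0:ℝ)..t, Φ s) (Φ t) := by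
  set γ : ℝ → E := fun t => c + ∫ s in (0:ℝ)..t, Φ s with hγdef
  have hγcont : Continuous γ :=
    continuous_const.add (intervalIntegral.continuous_primitive
      (fun a b => hΦ.intervalIntegrable) 0)
  have hK : IsCompact (γ '' Icc 0 T) := isCompact_Icc.image hγcont
  set K1 := Metric.cthickening 1 (γ '' Icc 0 T) with hK1def
  have hK1 : IsCompact K1 := hK.cthickening
  have hdv : Continuous (fderiv ℝ v) := hv.continuous_fderiv one_ne_zero
  obtain ⟨C, hC⟩ := hK1.exists_bound_of_continuousOn hdv.continuousOn
  have hγmemK1 : ∀ t ∈ Icc (0:ℝ) T, γ t ∈ K1 := fun t ht =>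
    Metric.self_subset_cthickening _ (mem_image_of_mem γ ht)
  have hC0 : 0 ≤ C := le_trans (norm_nonneg _) (hC _ (hγmemK1 0 ⟨le_rfl, hT⟩))
  -- approximating sequence
  have hex : ∀ k : ℕ, ∃ g : ℝ → E, HasCompactSupport g ∧
      (∫ x, ‖Φ x - g x‖) ≤ 1/(k+1) ∧ Continuous g ∧ Integrable g volume := fun k =>
    hΦ.exists_hasCompactSupport_integral_sub_le (by positivity)
  choose Ψ hΨsupp hΨdist hΨcont hΨint using hex
  set γk : ℕ → ℝ → E := fun k t => c + ∫ s in (0:ℝ)..t, Ψ k s with hγkdef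
  have hγkcont : ∀ k, Continuous (γk k) := fun k =>
    continuous_const.add (intervalIntegral.continuous_primitive
      (fun a b => (hΨint k).intervalIntegrable) 0)
  have hderiv : ∀ k t, HasDerivAt (γk k) (Ψ k t) t := by
    intro k t
    exact ((intervalIntegral.integral_hasDerivAt_right ((hΨint k).intervalIntegrable)
      ((hΨcont k).stronglyMeasurable.stronglyMeasurableAtFilter)
      (hΨcont k).continuousAt)).const_add c
  -- distance bound
  have hsubint : ∀ k, Integrable (fun s => Φ s - Ψ k s) := fun k => hΦ.sub (hΨint k)
  have hdist : ∀ k, ∀ t ∈ Icc (0:ℝ) T, ‖γk k t - γ t‖ ≤ 1/(k+1) := by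
    intro k t ht
    have h1 : γk k t - γ t = ∫ s in (0:ℝ)..t, (Ψ k s - Φ s) := by
      rw [hγkdef, hγdef]
      simp only [add_sub_add_left_eq_sub]
      rw [intervalIntegral.integral_sub ((hΨint k).intervalIntegrable)
        hΦ.intervalIntegrable]
    rw [h1]
    calc ‖∫ s in (0:ℝ)..t, (Ψ k s - Φ s)‖
        ≤ ∫ s in (0:ℝ)..t, ‖Ψ k s - Φ s‖ :=
          intervalIntegral.norm_integral_le_integral_norm ht.1
      _ = ∫ s in Ioc (0:ℝ) t, ‖Ψ k s - Φ s‖ := intervalIntegral.integral_of_le ht.1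
      _ ≤ ∫ s, ‖Ψ k s - Φ s‖ :=
          setIntegral_le_integral ((hΨint k).sub hΦ).norm
            (Eventually.of_forall fun s => norm_nonneg _)
      _ = ∫ s, ‖Φ s - Ψ k s‖ := by simp_rw [norm_sub_rev]
      _ ≤ 1/(k+1) := hΨdist k
  have hmemK1 : ∀ k, ∀ t ∈ Icc (0:ℝ) T, γk k t ∈ K1 := by
    intro k t ht
    apply Metric.closedBall_subset_cthickening (mem_image_of_mem γ ht)
    rw [Metric.mem_closedBall, dist_eq_norm]
    exact le_trans (hdist k t ht) (by
      rw [div_le_one (by positivity)]; linarith [Nat.cast_nonneg (α := ℝ) k])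
  -- FTC for the approximations
  have hFTC : ∀ k, ∫ t in (0:ℝ)..T, fderiv ℝ v (γk k t) (Ψ k t)
      = v (γk k T) - v c := by
    intro k
    have := intervalIntegral.integral_eq_sub_of_hasDerivAt
      (f := fun t => v (γk k t)) (f' := fun t => fderiv ℝ v (γk k t) (Ψ k t))
      (a := 0) (b := T)
      (fun t _ => ((hv.differentiable one_ne_zero _).hasFDerivAt).comp_hasDerivAt t (hderiv k t))
      (Continuous.intervalIntegrable
        (((hdv.comp (hγkcont k)).clm_apply (hΨcont k))) 0 T)
    simpa [show γk k 0 = c by simp [hγkdef]] using this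
  -- convergence of left-hand sides
  have htendnat : Tendsto (fun k : ℕ => 1/((k:ℝ)+1)) atTop (𝓝 0) :=
    tendsto_one_div_add_atTop_nhds_zero_nat
  have hγkT : Tendsto (fun k => γk k T) atTop (𝓝 (γ T)) := by
    rw [tendsto_iff_norm_sub_tendsto_zero]
    exact squeeze_zero (fun k => norm_nonneg _)
      (fun k => hdist k T ⟨hT, le_rfl⟩) htendnat
  have hLHS : Tendsto (fun k => v (γk k T)) atTop (𝓝 (v (γ T))) :=
    ((hv.continuous.tendsto _).comp hγkT)
  -- convergence of integrals
  set D : ℝ → ℝ := fun t => fderiv ℝ v (γ t) (Φ t) with hDdef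
  set Dk : ℕ → ℝ → ℝ := fun k t => fderiv ℝ v (γk k t) (Ψ k t) with hDkdef
  have hDmeas : AEStronglyMeasurable D volume :=
    isBoundedBilinearMap_apply.continuous.comp_aestronglyMeasurable
      (((hdv.comp hγcont).aestronglyMeasurable).prodMk hΦ.1)
  have hDboundIoc : ∀ t ∈ Ioc (0:ℝ) T, ‖D t‖ ≤ C * ‖Φ t‖ := by
    intro t ht
    calc ‖fderiv ℝ v (γ t) (Φ t)‖ ≤ ‖fderiv ℝ v (γ t)‖ * ‖Φ t‖ :=
        ContinuousLinearMap.le_opNorm _ _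
      _ ≤ C * ‖Φ t‖ :=
        mul_le_mul_of_nonneg_right (hC _ (hγmemK1 t (Ioc_subset_Icc_self ht)))
          (norm_nonneg _)
  have hDint : IntegrableOn D (Ioc 0 T) := by
    apply Integrable.mono' ((hΦ.norm.const_mul C).integrableOn) hDmeas.restrict
    filter_upwards [ae_restrict_mem measurableSet_Ioc] with t ht
    exact hDboundIoc t ht
  have hDkint : ∀ k, IntegrableOn (Dk k) (Ioc 0 T) := by
    intro k
    exact (((hdv.comp (hγkcont k)).clm_apply (hΨcont k)).continuousOn).integrableOn_compact
      isCompact_Icc |>.mono_set Ioc_subset_Icc_self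
  -- the middle term
  set I : ℕ → ℝ := fun k =>
    ∫ t in Ioc (0:ℝ) T, ‖fderiv ℝ v (γk k t) - fderiv ℝ v (γ t)‖ * ‖Φ t‖ with hIdef
  have hγkt : ∀ t ∈ Icc (0:ℝ) T, Tendsto (fun k => γk k t) atTop (𝓝 (γ t)) := by
    intro t ht
    rw [tendsto_iff_norm_sub_tendsto_zero]
    exact squeeze_zero (fun k => norm_nonneg _) (fun k => hdist k t ht) htendnat
  have hI' : Tendsto I atTop (𝓝 (∫ _ in Ioc (0:ℝ) T, (0:ℝ))) := by
    rw [hIdef]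
    apply tendsto_integral_of_dominated_convergence (fun t => (2*C) * ‖Φ t‖)
    · intro k
      exact (((hdv.comp (hγkcont k)).sub (hdv.comp hγcont)).norm.aestronglyMeasurable.mul
        hΦ.1.norm).restrict
    · exact ((hΦ.norm.const_mul (2*C)).integrableOn)
    · intro k
      filter_upwards [ae_restrict_mem measurableSet_Ioc] with t ht
      have h1 : ‖fderiv ℝ v (γk k t) - fderiv ℝ v (γ t)‖ ≤ 2 * C := by
        calc ‖fderiv ℝ v (γk k t) - fderiv ℝ v (γ t)‖
            ≤ ‖fderiv ℝ v (γk k t)‖ + ‖fderiv ℝ v (γ t)‖ := norm_sub_le _ _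
          _ ≤ C + C := add_le_add (hC _ (hmemK1 k t (Ioc_subset_Icc_self ht)))
              (hC _ (hγmemK1 t (Ioc_subset_Icc_self ht)))
          _ = 2 * C := by ring
      rw [Real.norm_eq_abs, abs_of_nonneg (mul_nonneg (norm_nonneg _) (norm_nonneg _))]
      exact mul_le_mul_of_nonneg_right h1 (norm_nonneg _)
    · filter_upwards [ae_restrict_mem measurableSet_Ioc] with t ht
      have h2 : Tendsto (fun k => fderiv ℝ v (γk k t)) atTop (𝓝 (fderiv ℝ v (γ t))) :=
        (hdv.tendsto _).comp (hγkt t (Ioc_subset_Icc_self ht))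
      have h3 : Tendsto (fun k => ‖fderiv ℝ v (γk k t) - fderiv ℝ v (γ t)‖ * ‖Φ t‖)
          atTop (𝓝 (‖fderiv ℝ v (γ t) - fderiv ℝ v (γ t)‖ * ‖Φ t‖)) :=
        ((h2.sub tendsto_const_nhds).norm).mul tendsto_const_nhds
      simpa using h3
  have hI : Tendsto I atTop (𝓝 0) := by simpa using hI'
  -- main estimate
  have hBint : ∀ k, IntegrableOn
      (fun t => ‖fderiv ℝ v (γk k t) - fderiv ℝ v (γ t)‖ * ‖Φ t‖) (Ioc 0 T) := by
    intro k
    apply Integrable.mono' ((hΦ.norm.const_mul (2*C)).integrableOn)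
    · exact ((((hdv.comp (hγkcont k)).sub (hdv.comp hγcont)).norm.aestronglyMeasurable.mul
        hΦ.1.norm).restrict)
    · filter_upwards [ae_restrict_mem measurableSet_Ioc] with t ht
      rw [Real.norm_eq_abs, abs_of_nonneg (mul_nonneg (norm_nonneg _) (norm_nonneg _))]
      apply mul_le_mul_of_nonneg_right _ (norm_nonneg _)
      calc ‖fderiv ℝ v (γk k t) - fderiv ℝ v (γ t)‖
          ≤ ‖fderiv ℝ v (γk k t)‖ + ‖fderiv ℝ v (γ t)‖ := norm_sub_le _ _
        _ ≤ C + C := add_le_add (hC _ (hmemK1 k t (Ioc_subset_Icc_self ht)))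
            (hC _ (hγmemK1 t (Ioc_subset_Icc_self ht)))
        _ = 2 * C := by ring
  have hAint : ∀ k, IntegrableOn (fun t => C * ‖Ψ k t - Φ t‖) (Ioc (0:ℝ) T) := fun k =>
    (((hΨint k).sub hΦ).norm.const_mul C).integrableOn
  have hest : ∀ k, |(∫ t in (0:ℝ)..T, Dk k t) - ∫ t in (0:ℝ)..T, D t|
      ≤ C * (1/(k+1)) + I k := by
    intro k
    rw [intervalIntegral.integral_of_le hT, intervalIntegral.integral_of_le hT,
      ← integral_sub (hDkint k) hDint]
    calc |∫ t in Ioc (0:ℝ) T, (Dk k t - D t)|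
        ≤ ∫ t in Ioc (0:ℝ) T, ‖Dk k t - D t‖ := by
          rw [← Real.norm_eq_abs]; exact norm_integral_le_integral_norm _
      _ ≤ ∫ t in Ioc (0:ℝ) T, (C * ‖Ψ k t - Φ t‖ +
            ‖fderiv ℝ v (γk k t) - fderiv ℝ v (γ t)‖ * ‖Φ t‖) := by
          apply setIntegral_mono_on (((hDkint k).sub hDint).norm)
            ((hAint k).add (hBint k)) measurableSet_Ioc
          intro t ht
          calc ‖Dk k t - D t‖
              = ‖fderiv ℝ v (γk k t) (Ψ k t - Φ t) +
                  (fderiv ℝ v (γk k t) - fderiv ℝ v (γ t)) (Φ t)‖ := by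
                congr 1
                simp only [hDkdef, hDdef, map_sub, ContinuousLinearMap.sub_apply]
                abel
            _ ≤ ‖fderiv ℝ v (γk k t) (Ψ k t - Φ t)‖ +
                  ‖(fderiv ℝ v (γk k t) - fderiv ℝ v (γ t)) (Φ t)‖ := norm_add_le _ _
            _ ≤ C * ‖Ψ k t - Φ t‖ +
                  ‖fderiv ℝ v (γk k t) - fderiv ℝ v (γ t)‖ * ‖Φ t‖ := by
                gcongr
                · calc ‖fderiv ℝ v (γk k t) (Ψ k t - Φ t)‖
                      ≤ ‖fderiv ℝ v (γk k t)‖ * ‖Ψ k t - Φ t‖ :=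
                        ContinuousLinearMap.le_opNorm _ _
                    _ ≤ C * ‖Ψ k t - Φ t‖ := by
                        gcongr; exact hC _ (hmemK1 k t (Ioc_subset_Icc_self ht))
                · exact ContinuousLinearMap.le_opNorm _ _
      _ = (∫ t in Ioc (0:ℝ) T, C * ‖Ψ k t - Φ t‖) + I k :=
          integral_add (hAint k) (hBint k)
      _ ≤ C * (1/(k+1)) + I k := by
          gcongr
          rw [integral_const_mul]
          apply mul_le_mul_of_nonneg_left _ hC0
          calc ∫ t in Ioc (0:ℝ) T, ‖Ψ k t - Φ t‖
              ≤ ∫ t, ‖Ψ k t - Φ t‖ := setIntegral_le_integral ((hΨint k).sub hΦ).norm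
                (Eventually.of_forall fun s => norm_nonneg _)
            _ = ∫ t, ‖Φ t - Ψ k t‖ := by simp_rw [norm_sub_rev]
            _ ≤ 1/(k+1) := hΨdist k
  -- conclude
  have hRHS : Tendsto (fun k => ∫ t in (0:ℝ)..T, Dk k t) atTop
      (𝓝 (∫ t in (0:ℝ)..T, D t)) := by
    rw [tendsto_iff_norm_sub_tendsto_zero]
    apply squeeze_zero (fun k => norm_nonneg _) (fun k => hest k)
    have : Tendsto (fun k : ℕ => C * (1/((k:ℝ)+1)) + I k) atTop (𝓝 (C * 0 + 0)) :=
      (htendnat.const_mul C).add hI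
    simpa using this
  have : Tendsto (fun k => v (γk k T)) atTop (𝓝 (v c + ∫ t in (0:ℝ)..T, D t)) := by
    have : (fun k => v (γk k T)) = fun k => v c + ∫ t in (0:ℝ)..T, Dk k t := by
      funext k; rw [hFTC k]; ring
    rw [this]
    exact tendsto_const_nhds.add hRHS
  exact tendsto_nhds_unique hLHS this

set_option maxHeartbeats 1000000 in
lemma pointwise_liouville (n m : ℕ) (T : ℝ) (hT : 0 < T)
    (f : ℝ × (Fin n → ℝ) → Fin n → ℝ) (g : ℝ × (Fin n → ℝ) → Fin n → Fin m → ℝ)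
    (u : ℝ × (Fin n → ℝ) → Fin m → ℝ)
    (x : ℝ → Fin n → ℝ) (hsol : IsSolution n m T f g u x)
    (v : ℝ × (Fin n → ℝ) → ℝ) (hv : ContDiff ℝ 1 v) :
    v (T, x T) = v (0, x 0) +
      ∫ t in Ioc (0:ℝ) T,
        (Lf n f v (t, x t) + ∑ j, Lg n m g v (t, x t) j * u (t, x t) j) := by
  obtain ⟨hxc, hFint, hxeq⟩ := hsol
  set F : ℝ → Fin n → ℝ :=
    fun s => (fun i => f (s, x s) i + ∑ j, g (s, x s) i j * u (s, x s) j) with hFdef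
  have hFIoc : IntegrableOn F (Ioc 0 T) :=
    (intervalIntegrable_iff_integrableOn_Ioc_of_le hT.le).1 hFint
  set Φ : ℝ → ℝ × (Fin n → ℝ) := (Ioc (0:ℝ) T).indicator (fun s => ((1:ℝ), F s)) with hΦdef
  have hΦint' : Integrable Φ := by
    have : IntegrableOn (fun s => ((1:ℝ), F s)) (Ioc 0 T) :=
      Integrable.prodMk (integrableOn_const (C := (1:ℝ)) measure_Ioc_lt_top.ne) hFIoc
    exact (integrable_indicator_iff measurableSet_Ioc).2 this
  have hprim : ∀ t ∈ Icc (0:ℝ) T,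
      ((0:ℝ), x 0) + ∫ s in (0:ℝ)..t, Φ s = (t, x t) := by
    intro t ht
    have hsub : Ioc (0:ℝ) t ⊆ Ioc 0 T := Ioc_subset_Ioc_right ht.2
    have h1 : ∫ s in (0:ℝ)..t, Φ s = ∫ s in Ioc (0:ℝ) t, (fun s => ((1:ℝ), F s)) s := by
      rw [intervalIntegral.integral_of_le ht.1, hΦdef, setIntegral_indicator measurableSet_Ioc,
        inter_eq_self_of_subset_left hsub]
    have h2 : ∫ s in Ioc (0:ℝ) t, (fun s => ((1:ℝ), F s)) s
        = ((∫ s in Ioc (0:ℝ) t, (1:ℝ)), ∫ s in Ioc (0:ℝ) t, F s) :=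
      integral_pair (integrableOn_const (C := (1:ℝ)) measure_Ioc_lt_top.ne) (hFIoc.mono_set hsub)
    have h3 : ∫ s in Ioc (0:ℝ) t, (1:ℝ) = t := by
      simp [Real.volume_Ioc, ht.1]
    have h4 : ∫ s in Ioc (0:ℝ) t, F s = x t - x 0 := by
      have := hxeq t ht
      rw [← intervalIntegral.integral_of_le ht.1]
      rw [this]; abel
    rw [h1, h2, h3, h4, Prod.mk_add_mk]
    simp
  have key := chain_ftc Φ hΦint' ((0:ℝ), x 0) T hT.le v hv
  rw [hprim T ⟨hT.le, le_rfl⟩] at key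
  rw [key]
  congr 1
  rw [intervalIntegral.integral_of_le hT.le]
  apply setIntegral_congr_fun measurableSet_Ioc
  intro t ht
  have hmem : (t, x t) = ((0:ℝ), x 0) + ∫ s in (0:ℝ)..t, Φ s :=
    (hprim t (Ioc_subset_Icc_self ht)).symm
  simp only []
  rw [← hmem, hΦdef, indicator_of_mem ht]
  have hsplit : (((1:ℝ), F t) : ℝ × (Fin n → ℝ))
      = ((1:ℝ), f (t, x t)) + ∑ j, u (t, x t) j • (((0:ℝ), fun i => g (t, x t) i j)) := by
    apply Prod.ext
    · simp [Prod.fst_sum]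
    · simp only [Prod.snd_add, Prod.snd_sum, Prod.smul_mk, smul_zero]
      funext i
      simp [hFdef, Finset.sum_apply, mul_comm]
  rw [hsplit, map_add, map_sum]
  simp only [_root_.map_smul, smul_eq_mul]
  simp only [Lf, Lg]
  congr 1
  exact Finset.sum_congr rfl fun j _ => mul_comm _ _


set_option maxHeartbeats 2000000 in
set_option synthInstance.maxHeartbeats 200000 in
theorem liouville_equation_of_trajectory_family
    (n m : ℕ) (T : ℝ) (hT : 0 < T)
    (f : ℝ × (Fin n → ℝ) → Fin n → ℝ) (g : ℝ × (Fin n → ℝ) → Fin n → Fin m → ℝ)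
    (hf : Continuous f) (hg : Continuous g)
    (X : Set (Fin n → ℝ)) (hX : IsCompact X)
    (u : ℝ × (Fin n → ℝ) → Fin m → ℝ) (hu : Measurable u)
    (huU : ∀ q j, u q j ∈ Icc (-1:ℝ) 1)
    -- the initial measure, a finite Borel measure supported on `X`
    (μ₀ : Measure (Fin n → ℝ)) [IsFiniteMeasure μ₀] (hμ₀X : μ₀ Xᶜ = 0)
    -- the family of trajectories `x(·|x₀)`
    (traj : (Fin n → ℝ) → ℝ → (Fin n → ℝ))
    (htrajmeas : Measurable (fun q : ℝ × (Fin n → ℝ) => traj q.2 q.1))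
    (htraj : ∀ᵐ x₀ ∂μ₀, IsSolution n m T f g u (traj x₀) ∧ traj x₀ 0 = x₀ ∧
      ∀ t ∈ Icc (0:ℝ) T, traj x₀ t ∈ X)
    -- the final measure: pushforward of `μ₀` under `x₀ ↦ x(T|x₀)`
    (μT : Measure (Fin n → ℝ)) (hμT : μT = Measure.map (fun x₀ => traj x₀ T) μ₀)
    -- the average occupation measure: `μ(A) = ∫ μ_{x₀}(A) dμ₀(x₀)` where `μ_{x₀}` is the
    -- pushforward of Lebesgue measure on `[0,T]` under `t ↦ (t, x(t|x₀))`
    (μ : Measure (ℝ × (Fin n → ℝ)))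
    (hμ : μ = μ₀.bind (fun x₀ =>
      Measure.map (fun t => (t, traj x₀ t)) (volume.restrict (Icc (0:ℝ) T)))) :
    ∀ v : ℝ × (Fin n → ℝ) → ℝ, ContDiff ℝ 1 v →
      ∫ y, v (T, y) ∂μT = (∫ y, v (0, y) ∂μ₀) +
        ∫ q, (Lf n f v q + ∑ j, Lg n m g v q j * u q j) ∂μ := by
  intro v hv
  set H : ℝ × (Fin n → ℝ) → ℝ :=
    fun q => Lf n f v q + ∑ j, Lg n m g v q j * u q j with hHdef
  have hdv : Continuous (fderiv ℝ v) := hv.continuous_fderiv one_ne_zero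
  have hLfc : Continuous (Lf n f v) := hdv.clm_apply (continuous_const.prodMk hf)
  have hgj : ∀ j, Continuous (fun q => (fun i => g q i j)) := fun j =>
    continuous_pi fun i => (continuous_apply j).comp ((continuous_apply i).comp hg)
  have hLgc : ∀ j, Continuous (fun q => Lg n m g v q j) := fun j =>
    hdv.clm_apply (continuous_const.prodMk (hgj j))
  have huj : ∀ j, Measurable (fun q => u q j) := fun j => (measurable_pi_apply j).comp hu
  have hHmeas : Measurable H := by
    apply Measurable.add (hLfc.measurable)
    exact Finset.measurable_sum _ fun j _ => (hLgc j).measurable.mul (huj j)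
  -- bound for H on [0,T] × X
  set K₂ : Set (ℝ × (Fin n → ℝ)) := Icc (0:ℝ) T ×ˢ X with hK₂def
  have hK₂ : IsCompact K₂ := isCompact_Icc.prod hX
  have hBc : Continuous (fun q => |Lf n f v q| + ∑ j, |Lg n m g v q j|) :=
    hLfc.abs.add (continuous_finset_sum _ fun j _ => (hLgc j).abs)
  obtain ⟨CB, hCB⟩ := hK₂.exists_bound_of_continuousOn hBc.continuousOn
  have hHb : ∀ q ∈ K₂, |H q| ≤ CB := by
    intro q hq
    have h1 : |H q| ≤ |Lf n f v q| + ∑ j, |Lg n m g v q j| := by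
      refine le_trans (abs_add_le _ _) (add_le_add le_rfl ?_)
      refine le_trans (Finset.abs_sum_le_sum_abs _ _) ?_
      apply Finset.sum_le_sum
      intro j _
      rw [abs_mul]
      have := huU q j
      have hu1 : |u q j| ≤ 1 := abs_le.2 ⟨this.1, this.2⟩
      calc |Lg n m g v q j| * |u q j| ≤ |Lg n m g v q j| * 1 := by
            gcongr
        _ = |Lg n m g v q j| := mul_one _
    calc |H q| ≤ |Lf n f v q| + ∑ j, |Lg n m g v q j| := h1
      _ ≤ CB := le_trans (le_abs_self _) (by simpa [Real.norm_eq_abs] using hCB q hq)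
  -- rewrite μ as a pushforward of a product measure
  set ν : Measure ℝ := volume.restrict (Icc (0:ℝ) T) with hνdef
  haveI : IsFiniteMeasure ν := ⟨by
    rw [hνdef, Measure.restrict_apply_univ]; exact measure_Icc_lt_top⟩
  set Φm : (Fin n → ℝ) × ℝ → ℝ × (Fin n → ℝ) := fun p => (p.2, traj p.1 p.2) with hΦmdef
  have hΦm : Measurable Φm :=
    measurable_snd.prodMk (htrajmeas.comp measurable_swap)
  have hker : ∀ x₀, Measurable (fun t : ℝ => (t, traj x₀ t)) := fun x₀ =>
    measurable_id.prodMk (htrajmeas.comp (measurable_id.prodMk measurable_const))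
  have hkm : Measurable (fun x₀ => Measure.map (fun t => (t, traj x₀ t)) ν) := by
    apply Measure.measurable_of_measurable_coe
    intro s hs
    simp_rw [Measure.map_apply (hker _) hs]
    have heq : ∀ x₀, (fun t => (t, traj x₀ t)) ⁻¹' s = Prod.mk x₀ ⁻¹' (Φm ⁻¹' s) :=
      fun _ => rfl
    simp_rw [heq]
    exact measurable_measure_prodMk_left (hΦm hs)
  have hμeq : μ = Measure.map Φm (μ₀.prod ν) := by
    rw [hμ]
    ext s hs
    rw [Measure.map_apply hΦm hs, Measure.prod_apply (hΦm hs),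
      Measure.bind_apply hs hkm.aemeasurable]
    apply lintegral_congr
    intro x₀
    rw [Measure.map_apply (hker x₀) hs]
    rfl
  -- the null set of bad initial conditions
  set good : (Fin n → ℝ) → Prop := fun x₀ => IsSolution n m T f g u (traj x₀) ∧
    traj x₀ 0 = x₀ ∧ ∀ t ∈ Icc (0:ℝ) T, traj x₀ t ∈ X with hgooddef
  have hN : μ₀ {x₀ | ¬ good x₀} = 0 := htraj
  -- a.e. bound on the product
  have haeK₂ : ∀ᵐ p ∂(μ₀.prod ν), Φm p ∈ K₂ := by
    rw [ae_iff]
    apply measure_mono_null (t := {x₀ | ¬ good x₀} ×ˢ univ ∪ univ ×ˢ (Icc (0:ℝ) T)ᶜ)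
    · intro p hp
      simp only [mem_setOf_eq] at hp
      by_contra hcon
      simp only [mem_union, mem_prod, mem_univ, and_true, true_and, mem_setOf_eq,
        not_or, mem_compl_iff, not_not] at hcon
      exact hp (Set.mem_prod.2 ⟨hcon.2, hcon.1.2.2 p.2 hcon.2⟩)
    · apply measure_union_null
      · rw [Measure.prod_prod, hN, zero_mul]
      · rw [Measure.prod_prod, hνdef, Measure.restrict_apply (measurableSet_Icc.compl),
          compl_inter_self, measure_empty, mul_zero]
  have hint : Integrable (fun p => H (Φm p)) (μ₀.prod ν) := by
    apply Integrable.mono' (integrable_const CB) ((hHmeas.comp hΦm).aestronglyMeasurable)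
    filter_upwards [haeK₂] with p hp
    rw [Real.norm_eq_abs]
    exact hHb _ hp
  -- compute the μ integral
  have hμint : ∫ q, H q ∂μ = ∫ x₀, ∫ t in Icc (0:ℝ) T, H (t, traj x₀ t) ∂volume ∂μ₀ := by
    rw [hμeq, integral_map hΦm.aemeasurable hHmeas.aestronglyMeasurable,
      integral_prod _ hint]
  -- the inner integral, via the pointwise Liouville identity
  have hTIcc : T ∈ Icc (0:ℝ) T := ⟨hT.le, le_rfl⟩
  have hinner : ∀ᵐ x₀ ∂μ₀, (∫ t in Icc (0:ℝ) T, H (t, traj x₀ t) ∂volume)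
      = v (T, traj x₀ T) - v (0, x₀) := by
    filter_upwards [htraj] with x₀ hx₀
    rw [integral_Icc_eq_integral_Ioc]
    have hpt := pointwise_liouville n m T hT f g u (traj x₀) hx₀.1 v hv
    rw [hx₀.2.1] at hpt
    simp only [hHdef]
    rw [hpt]
    ring
  have hTmeas : Measurable (fun x₀ => traj x₀ T) :=
    htrajmeas.comp (measurable_const.prodMk measurable_id)
  have hgoodae : ∀ᵐ x₀ ∂μ₀, x₀ ∈ X := by
    rw [ae_iff]
    exact hμ₀X
  obtain ⟨Cv, hCv⟩ := hK₂.exists_bound_of_continuousOn hv.continuous.continuousOn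
  have hG1int : Integrable (fun x₀ => v (T, traj x₀ T)) μ₀ := by
    apply Integrable.mono' (integrable_const Cv)
      ((hv.continuous.measurable.comp
        (measurable_const.prodMk hTmeas)).aestronglyMeasurable)
    filter_upwards [htraj] with x₀ hx₀
    exact hCv _ (Set.mem_prod.2 ⟨hTIcc, hx₀.2.2 T hTIcc⟩)
  have hG2int : Integrable (fun x₀ => v (0, x₀)) μ₀ := by
    apply Integrable.mono' (integrable_const Cv)
      ((hv.continuous.comp (Continuous.prodMk_right (0:ℝ))).measurable.aestronglyMeasurable)
    filter_upwards [hgoodae] with x₀ hx₀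
    exact hCv _ (Set.mem_prod.2 ⟨⟨le_rfl, hT.le⟩, hx₀⟩)
  have hμfinal : ∫ q, H q ∂μ
      = (∫ x₀, v (T, traj x₀ T) ∂μ₀) - ∫ x₀, v (0, x₀) ∂μ₀ := by
    rw [hμint, integral_congr_ae hinner, integral_sub hG1int hG2int]
  have hcontT : Continuous (fun y : Fin n → ℝ => v (T, y)) :=
    hv.continuous.comp (Continuous.prodMk_right T)
  have hLHS : ∫ y, v (T, y) ∂μT = ∫ x₀, v (T, traj x₀ T) ∂μ₀ := by
    rw [hμT, integral_map hTmeas.aemeasurable hcontT.aestronglyMeasurable]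
  rw [hLHS, hμfinal]
  ring
end
end

section
/- Suppose nonnegative finite Borel measures σ⁺_j, σ⁻_j, σ̂_j (j = 1,…,m) and μ on [0,T]×X, μ₀ on X, and μ_T on X_T satisfy: (i) σ⁺_j + σ⁻_j + σ̂_j = μ for each j; and (ii) Liouville's equation: for every v ∈ C¹([0,T]×ℝⁿ), ∫ v(T,y) dμ_T(y) = ∫ v(0,x) dμ₀(x) + ∫ (L_f v) dμ + Σ_{j=1}^m ∫ [L_g v]_j d(σ⁺_j − σ⁻_j). Then there exists a Borel measurable ũ : [0,T]×X → U = [-1,1]^m such that for every v ∈ C¹([0,T]×ℝⁿ): ∫ v(T,y) dμ_T(y) = ∫ v(0,x) dμ₀(x) + ∫_{[0,T]×X} [ (L_f v)(t,y) + Σ_{j=1}^m [L_g v]_j(t,y) ũ_j(t,y) ] dμ(t,y). -/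
open MeasureTheory Set Filter


lemma integrable_mul_aux {α : Type*} [MeasurableSpace α] [TopologicalSpace α]
    [OpensMeasurableSpace α] {K : Set α} (hK : IsCompact K)
    (ν : Measure α) [IsFiniteMeasure ν] (hν : ν Kᶜ = 0) {w u : α → ℝ}
    (hw : Continuous w) (hu : Measurable u) (hub : ∀ᵐ q ∂ν, |u q| ≤ 1) :
    Integrable (fun q => w q * u q) ν := by
  obtain ⟨C, hC⟩ := hK.exists_bound_of_continuousOn hw.continuousOn
  have hmem : ∀ᵐ q ∂ν, q ∈ K := by
    rw [ae_iff]
    exact hν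
  refine ⟨(hw.measurable.mul hu).aestronglyMeasurable,
    HasFiniteIntegral.of_bounded (C := C) ?_⟩
  filter_upwards [hmem, hub] with q hq hq1
  have h1 : ‖w q‖ ≤ C := hC q hq
  have h0 : (0:ℝ) ≤ ‖w q‖ := norm_nonneg _
  calc ‖w q * u q‖ = ‖w q‖ * |u q| := by rw [norm_mul]; rfl
    _ ≤ C * 1 := mul_le_mul h1 hq1 (abs_nonneg _) (le_trans h0 h1)
    _ = C := mul_one C

lemma integrable_cont_aux {α : Type*} [MeasurableSpace α] [TopologicalSpace α]
    [OpensMeasurableSpace α] {K : Set α} (hK : IsCompact K)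
    (ν : Measure α) [IsFiniteMeasure ν] (hν : ν Kᶜ = 0) {w : α → ℝ}
    (hw : Continuous w) : Integrable w ν := by
  have := integrable_mul_aux hK ν hν hw measurable_const
    (ae_of_all _ (fun q => by simp : ∀ q, |(1:ℝ)| ≤ 1))
  simpa using this


noncomputable section

theorem control_extraction_from_liouville
    (n m : ℕ) (T : ℝ) (hT : 0 < T)
    (f : ℝ × (Fin n → ℝ) → Fin n → ℝ) (g : ℝ × (Fin n → ℝ) → Fin n → Fin m → ℝ)
    (hf : Continuous f) (hg : Continuous g)
    (X : Set (Fin n → ℝ)) (hX : IsCompact X)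
    (XT : Set (Fin n → ℝ)) (hXT : IsCompact XT) (hXTsub : XT ⊆ X)
    -- nonnegative finite Borel measures on `[0,T] × X`
    (σp σm σh : Fin m → Measure (ℝ × (Fin n → ℝ)))
    (μ : Measure (ℝ × (Fin n → ℝ)))
    [∀ j, IsFiniteMeasure (σp j)] [∀ j, IsFiniteMeasure (σm j)]
    [∀ j, IsFiniteMeasure (σh j)] [IsFiniteMeasure μ]
    (hσpX : ∀ j, σp j (Icc (0:ℝ) T ×ˢ X)ᶜ = 0) (hσmX : ∀ j, σm j (Icc (0:ℝ) T ×ˢ X)ᶜ = 0)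
    (hσhX : ∀ j, σh j (Icc (0:ℝ) T ×ˢ X)ᶜ = 0) (hμX : μ (Icc (0:ℝ) T ×ˢ X)ᶜ = 0)
    -- a nonnegative finite Borel measure on `X` and one on `X_T`
    (μ₀ : Measure (Fin n → ℝ)) [IsFiniteMeasure μ₀] (hμ₀X : μ₀ Xᶜ = 0)
    (μT : Measure (Fin n → ℝ)) [IsFiniteMeasure μT] (hμTX : μT XTᶜ = 0)
    -- (i) `σ⁺_j + σ⁻_j + σ̂_j = μ` for each `j`
    (hsum : ∀ j, σp j + σm j + σh j = μ)
    -- (ii) Liouville's equation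
    (hliouville : ∀ v : ℝ × (Fin n → ℝ) → ℝ, ContDiff ℝ 1 v →
      ∫ y, v (T, y) ∂μT = (∫ y, v (0, y) ∂μ₀) + (∫ q, Lf n f v q ∂μ) +
        ∑ j, ((∫ q, Lg n m g v q j ∂(σp j)) - ∫ q, Lg n m g v q j ∂(σm j))) :
    ∃ utilde : ℝ × (Fin n → ℝ) → Fin m → ℝ, Measurable utilde ∧
      (∀ q j, utilde q j ∈ Icc (-1:ℝ) 1) ∧
      ∀ v : ℝ × (Fin n → ℝ) → ℝ, ContDiff ℝ 1 v →
        ∫ y, v (T, y) ∂μT = (∫ y, v (0, y) ∂μ₀) +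
          ∫ q, (Lf n f v q + ∑ j, Lg n m g v q j * utilde q j) ∂μ := by
  classical
  set K : Set (ℝ × (Fin n → ℝ)) := Icc (0:ℝ) T ×ˢ X with hKdef
  have hKc : IsCompact K := isCompact_Icc.prod hX
  set ρp : Fin m → (ℝ × (Fin n → ℝ)) → ℝ :=
    fun j q => ((σp j).rnDeriv μ q).toReal with hρp
  set ρm : Fin m → (ℝ × (Fin n → ℝ)) → ℝ :=
    fun j q => ((σm j).rnDeriv μ q).toReal with hρm
  have hρpm : ∀ j, Measurable (ρp j) :=
    fun j => (Measure.measurable_rnDeriv _ _).ennreal_toReal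
  have hρmm : ∀ j, Measurable (ρm j) :=
    fun j => (Measure.measurable_rnDeriv _ _).ennreal_toReal
  set u : (ℝ × (Fin n → ℝ)) → Fin m → ℝ :=
    fun q j => max (-1) (min 1 (ρp j q - ρm j q)) with hu
  have hum : ∀ j, Measurable (fun q => u q j) := by
    intro j
    exact measurable_const.max (measurable_const.min ((hρpm j).sub (hρmm j)))
  -- basic measure inequalities
  have hlepm : ∀ j, σp j + σm j ≤ μ := by
    intro j
    rw [← hsum j]
    exact Measure.le_add_right le_rfl
  have hlep : ∀ j, σp j ≤ μ := fun j => (Measure.le_add_right le_rfl).trans (hlepm j)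
  have hlem : ∀ j, σm j ≤ μ := fun j => (Measure.le_add_left le_rfl).trans (hlepm j)
  -- a.e. identification of u with ρp - ρm
  have hae : ∀ j, (fun q => u q j) =ᵐ[μ] fun q => ρp j q - ρm j q := by
    intro j
    have h1 := Measure.rnDeriv_le_one_of_le (hlepm j)
    have h2 := Measure.rnDeriv_add' (σp j) (σm j) μ
    filter_upwards [h1, h2, Measure.rnDeriv_ne_top (σp j) μ,
      Measure.rnDeriv_ne_top (σm j) μ] with q hq1 hq2 hp hm
    have hab : ρp j q + ρm j q ≤ 1 := by
      have : (σp j).rnDeriv μ q + (σm j).rnDeriv μ q ≤ 1 := by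
        rw [← Pi.add_apply, ← hq2]
        exact hq1
      have := ENNReal.toReal_mono (by simp) this
      rw [ENNReal.toReal_add hp hm] at this
      simpa using this
    have ha0 : 0 ≤ ρp j q := ENNReal.toReal_nonneg
    have hb0 : 0 ≤ ρm j q := ENNReal.toReal_nonneg
    show max (-1) (min 1 (ρp j q - ρm j q)) = ρp j q - ρm j q
    rw [min_eq_right (by linarith), max_eq_right (by linarith)]
  -- a.e. bounds for ρ's
  have hρpb : ∀ j, ∀ᵐ q ∂μ, |ρp j q| ≤ 1 := by
    intro j
    filter_upwards [Measure.rnDeriv_le_one_of_le (hlep j)] with q hq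
    rw [abs_of_nonneg ENNReal.toReal_nonneg]
    simpa using ENNReal.toReal_mono (by simp) (hq)
  have hρmb : ∀ j, ∀ᵐ q ∂μ, |ρm j q| ≤ 1 := by
    intro j
    filter_upwards [Measure.rnDeriv_le_one_of_le (hlem j)] with q hq
    rw [abs_of_nonneg ENNReal.toReal_nonneg]
    simpa using ENNReal.toReal_mono (by simp) (hq)
  refine ⟨u, ?_, ?_, ?_⟩
  · exact measurable_pi_lambda _ hum
  · intro q j
    constructor
    · exact le_max_left _ _
    · exact max_le (by norm_num) (min_le_left _ _)
  intro v hv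
  have hfd : Continuous (fderiv ℝ v) := hv.continuous_fderiv one_ne_zero
  have hLf : Continuous (Lf n f v) :=
    hfd.clm_apply (continuous_const.prodMk hf)
  have hLg : ∀ j, Continuous (fun q => Lg n m g v q j) := by
    intro j
    exact hfd.clm_apply (continuous_const.prodMk (continuous_pi fun i =>
      (continuous_apply j).comp ((continuous_apply i).comp hg)))
  -- integrability
  have ILf : Integrable (Lf n f v) μ := integrable_cont_aux hKc μ hμX hLf
  have ILgu : ∀ j, Integrable (fun q => Lg n m g v q j * u q j) μ := fun j =>
    integrable_mul_aux hKc μ hμX (hLg j) (hum j)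
      (ae_of_all _ fun q => abs_le.2 ⟨le_max_left _ _, max_le (by norm_num) (min_le_left _ _)⟩)
  have Iρp : ∀ j, Integrable (fun q => Lg n m g v q j * ρp j q) μ := fun j =>
    integrable_mul_aux hKc μ hμX (hLg j) (hρpm j) (hρpb j)
  have Iρm : ∀ j, Integrable (fun q => Lg n m g v q j * ρm j q) μ := fun j =>
    integrable_mul_aux hKc μ hμX (hLg j) (hρmm j) (hρmb j)
  -- transfer σp, σm integrals to μ
  have hkey : ∀ j, (∫ q, Lg n m g v q j ∂(σp j)) - (∫ q, Lg n m g v q j ∂(σm j))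
      = ∫ q, Lg n m g v q j * u q j ∂μ := by
    intro j
    have hp : (∫ q, Lg n m g v q j ∂(σp j)) = ∫ q, ρp j q * Lg n m g v q j ∂μ := by
      haveI : (σp j).HaveLebesgueDecomposition μ :=
        @Measure.haveLebesgueDecomposition_of_sigmaFinite _ _ _ _ inferInstance inferInstance
      rw [← MeasureTheory.integral_rnDeriv_smul ((hlep j).absolutelyContinuous)]
      simp [smul_eq_mul, hρp]
    have hm : (∫ q, Lg n m g v q j ∂(σm j)) = ∫ q, ρm j q * Lg n m g v q j ∂μ := by
      haveI : (σm j).HaveLebesgueDecomposition μ :=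
        @Measure.haveLebesgueDecomposition_of_sigmaFinite _ _ _ _ inferInstance inferInstance
      rw [← MeasureTheory.integral_rnDeriv_smul ((hlem j).absolutelyContinuous)]
      simp [smul_eq_mul, hρm]
    rw [hp, hm]
    rw [← integral_sub]
    · refine integral_congr_ae ?_
      filter_upwards [hae j] with q hq
      rw [hq]; ring
    · have := Iρp j; simpa [mul_comm] using this
    · have := Iρm j; simpa [mul_comm] using this
  rw [hliouville v hv]
  rw [integral_add ILf (integrable_finset_sum _ (fun j _ => ILgu j))]
  rw [integral_finset_sum _ (fun j _ => ILgu j)]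
  rw [Finset.sum_congr rfl (fun j _ => hkey j)]
  ring
end
end

section
/- Let λ denote Lebesgue measure restricted to X. Suppose nonnegative finite Borel measures σ⁺_j, σ⁻_j, σ̂_j (j = 1,…,m) and μ on [0,T]×X, μ₀ and μ̂₀ on X, and μ_T on X_T satisfy the constraints of the primal program P: (i) for every v ∈ C¹([0,T]×ℝⁿ), ∫ v(T,y) dμ_T(y) = ∫ v(0,x) dμ₀(x) + ∫ (L_f v) dμ + Σ_{j=1}^m ∫ [L_g v]_j d(σ⁺_j − σ⁻_j); (ii) σ⁺_j + σ⁻_j + σ̂_j = μ for each j; (iii) μ₀ + μ̂₀ = λ. Suppose (v, w, p) satisfies the constraints of the dual program D: v ∈ C¹([0,T]×ℝⁿ), w : ℝⁿ → ℝ continuous with w ≥ 0 on X, continuous p₁,…,p_m with (L_f v) + Σ_{i=1}^m p_i ≤ 0 and p_i ≥ |[L_g v]_i| on [0,T]×X, w(x) ≥ v(0,x) + 1 for x ∈ X, and v(T,x) ≥ 0 for x ∈ X_T. Then μ₀(X) ≤ ∫_X w dλ (weak duality between P and D). -/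
open MeasureTheory Set Filter

noncomputable section

lemma integrable_of_null_compl {α : Type*} [MeasurableSpace α] [TopologicalSpace α]
    [OpensMeasurableSpace α] (μ : Measure α) [IsFiniteMeasure μ]
    {S : Set α} (hS : IsCompact S) (hμ : μ Sᶜ = 0) {f : α → ℝ} (hf : Continuous f) :
    Integrable f μ := by
  obtain ⟨C, hC⟩ := hS.exists_bound_of_continuousOn hf.continuousOn
  have hae : ∀ᵐ x ∂μ, x ∈ S := by
    rw [ae_iff]; exact hμ
  exact (integrable_const C).mono' hf.aestronglyMeasurable (hae.mono fun x hx => hC x hx)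

lemma ae_mem_of_null_compl {α : Type*} [MeasurableSpace α]
    (μ : Measure α) {S : Set α} (hμ : μ Sᶜ = 0) : ∀ᵐ x ∂μ, x ∈ S := by
  rw [ae_iff]; exact hμ

theorem weak_duality_P_D
    (n m : ℕ) (T : ℝ) (hT : 0 < T)
    (f : ℝ × (Fin n → ℝ) → Fin n → ℝ) (g : ℝ × (Fin n → ℝ) → Fin n → Fin m → ℝ)
    (hf : Continuous f) (hg : Continuous g)
    (X : Set (Fin n → ℝ)) (hX : IsCompact X)
    (XT : Set (Fin n → ℝ)) (hXT : IsCompact XT) (hXTsub : XT ⊆ X)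
    -- primal feasible point: nonnegative finite Borel measures on `[0,T] × X`
    (σp σm σh : Fin m → Measure (ℝ × (Fin n → ℝ)))
    (μ : Measure (ℝ × (Fin n → ℝ)))
    [∀ j, IsFiniteMeasure (σp j)] [∀ j, IsFiniteMeasure (σm j)]
    [∀ j, IsFiniteMeasure (σh j)] [IsFiniteMeasure μ]
    (hσpX : ∀ j, σp j (Icc (0:ℝ) T ×ˢ X)ᶜ = 0) (hσmX : ∀ j, σm j (Icc (0:ℝ) T ×ˢ X)ᶜ = 0)
    (hσhX : ∀ j, σh j (Icc (0:ℝ) T ×ˢ X)ᶜ = 0) (hμX : μ (Icc (0:ℝ) T ×ˢ X)ᶜ = 0)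
    -- measures on `X` and on `X_T`
    (μ₀ μh₀ : Measure (Fin n → ℝ)) [IsFiniteMeasure μ₀] [IsFiniteMeasure μh₀]
    (hμ₀X : μ₀ Xᶜ = 0) (hμh₀X : μh₀ Xᶜ = 0)
    (μT : Measure (Fin n → ℝ)) [IsFiniteMeasure μT] (hμTX : μT XTᶜ = 0)
    -- (i) Liouville's equation
    (hliouville : ∀ v : ℝ × (Fin n → ℝ) → ℝ, ContDiff ℝ 1 v →
      ∫ y, v (T, y) ∂μT = (∫ y, v (0, y) ∂μ₀) + (∫ q, Lf n f v q ∂μ) +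
        ∑ j, ((∫ q, Lg n m g v q j ∂(σp j)) - ∫ q, Lg n m g v q j ∂(σm j)))
    -- (ii) `σ⁺_j + σ⁻_j + σ̂_j = μ`
    (hsum : ∀ j, σp j + σm j + σh j = μ)
    -- (iii) `μ₀ + μ̂₀ = λ`, Lebesgue measure restricted to `X`
    (hlam : μ₀ + μh₀ = volume.restrict X)
    -- dual feasible point
    (v : ℝ × (Fin n → ℝ) → ℝ) (hv : ContDiff ℝ 1 v)
    (w : (Fin n → ℝ) → ℝ) (hw : Continuous w) (hwpos : ∀ y ∈ X, 0 ≤ w y)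
    (p : Fin m → ℝ × (Fin n → ℝ) → ℝ) (hp : ∀ i, Continuous (p i))
    (hineq1 : ∀ q ∈ Icc (0:ℝ) T ×ˢ X, Lf n f v q + ∑ i, p i q ≤ 0)
    (hineq2 : ∀ q ∈ Icc (0:ℝ) T ×ˢ X, ∀ i, |Lg n m g v q i| ≤ p i q)
    (hineq3 : ∀ y ∈ X, v (0, y) + 1 ≤ w y)
    (hineq4 : ∀ y ∈ XT, 0 ≤ v (T, y)) :
    (μ₀ X).toReal ≤ ∫ y in X, w y := by
  set S : Set (ℝ × (Fin n → ℝ)) := Icc (0:ℝ) T ×ˢ X with hSdef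
  have hS : IsCompact S := isCompact_Icc.prod hX
  -- continuity facts
  have hfd : Continuous (fderiv ℝ v) := hv.continuous_fderiv one_ne_zero
  have hLf : Continuous (Lf n f v) := hfd.clm_apply (continuous_const.prodMk hf)
  have hLg : ∀ j, Continuous (fun q => Lg n m g v q j) := fun j =>
    hfd.clm_apply (continuous_const.prodMk
      (continuous_pi fun i => (continuous_apply j).comp ((continuous_apply i).comp hg)))
  -- integrability
  have intLfμ : Integrable (Lf n f v) μ := integrable_of_null_compl μ hS hμX hLf
  have intpμ : ∀ j, Integrable (p j) μ := fun j => integrable_of_null_compl μ hS hμX (hp j)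
  have intpσp : ∀ j, Integrable (p j) (σp j) := fun j =>
    integrable_of_null_compl _ hS (hσpX j) (hp j)
  have intpσm : ∀ j, Integrable (p j) (σm j) := fun j =>
    integrable_of_null_compl _ hS (hσmX j) (hp j)
  have intpσh : ∀ j, Integrable (p j) (σh j) := fun j =>
    integrable_of_null_compl _ hS (hσhX j) (hp j)
  have intLgσp : ∀ j, Integrable (fun q => Lg n m g v q j) (σp j) := fun j =>
    integrable_of_null_compl _ hS (hσpX j) (hLg j)
  have intLgσm : ∀ j, Integrable (fun q => Lg n m g v q j) (σm j) := fun j =>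
    integrable_of_null_compl _ hS (hσmX j) (hLg j)
  -- a.e. membership
  have aeμ : ∀ᵐ q ∂μ, q ∈ S := ae_mem_of_null_compl μ hμX
  have aeσp : ∀ j, ∀ᵐ q ∂(σp j), q ∈ S := fun j => ae_mem_of_null_compl _ (hσpX j)
  have aeσm : ∀ j, ∀ᵐ q ∂(σm j), q ∈ S := fun j => ae_mem_of_null_compl _ (hσmX j)
  have aeσh : ∀ j, ∀ᵐ q ∂(σh j), q ∈ S := fun j => ae_mem_of_null_compl _ (hσhX j)
  have aeμ₀ : ∀ᵐ y ∂μ₀, y ∈ X := ae_mem_of_null_compl μ₀ hμ₀X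
  have aeμh₀ : ∀ᵐ y ∂μh₀, y ∈ X := ae_mem_of_null_compl μh₀ hμh₀X
  have aeμT : ∀ᵐ y ∂μT, y ∈ XT := ae_mem_of_null_compl μT hμTX
  -- Step: ∫ p j dμ splits
  have hsplit : ∀ j, ∫ q, p j q ∂μ =
      (∫ q, p j q ∂(σp j)) + (∫ q, p j q ∂(σm j)) + ∫ q, p j q ∂(σh j) := by
    intro j
    rw [← hsum j, integral_add_measure ((intpσp j).add_measure (intpσm j)) (intpσh j),
      integral_add_measure (intpσp j) (intpσm j)]
  have hph : ∀ j, 0 ≤ ∫ q, p j q ∂(σh j) := fun j =>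
    integral_nonneg_of_ae ((aeσh j).mono fun q hq =>
      le_trans (abs_nonneg _) (hineq2 q hq j))
  -- Step: Δ_j bound
  have hΔ : ∀ j, (∫ q, Lg n m g v q j ∂(σp j)) - (∫ q, Lg n m g v q j ∂(σm j)) ≤
      ∫ q, p j q ∂μ := by
    intro j
    have h1 : ∫ q, Lg n m g v q j ∂(σp j) ≤ ∫ q, p j q ∂(σp j) :=
      integral_mono_ae (intLgσp j) (intpσp j) ((aeσp j).mono fun q hq =>
        le_trans (le_abs_self _) (hineq2 q hq j))
    have h2 : -∫ q, Lg n m g v q j ∂(σm j) ≤ ∫ q, p j q ∂(σm j) := by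
      rw [← integral_neg]
      exact integral_mono_ae (intLgσm j).neg (intpσm j) ((aeσm j).mono fun q hq =>
        le_trans (neg_le_abs _) (hineq2 q hq j))
    rw [hsplit j]
    have := hph j
    linarith
  -- Step: ∫ Lf dμ + ∑ ∫ p dμ ≤ 0
  have hmain : (∫ q, Lf n f v q ∂μ) + ∑ j, ∫ q, p j q ∂μ ≤ 0 := by
    have heq : (∫ q, Lf n f v q ∂μ) + ∑ j, ∫ q, p j q ∂μ =
        ∫ q, (Lf n f v q + ∑ j, p j q) ∂μ := by
      rw [← integral_finset_sum _ (fun j _ => intpμ j),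
        ← integral_add intLfμ (integrable_finset_sum _ fun j _ => intpμ j)]
    rw [heq]
    exact integral_nonpos_of_ae (aeμ.mono fun q hq => hineq1 q hq)
  -- combine: ∫ v(0,·) dμ₀ ≥ 0
  have hTnonneg : 0 ≤ ∫ y, v (T, y) ∂μT :=
    integral_nonneg_of_ae (aeμT.mono fun y hy => hineq4 y hy)
  have hΔsum : (∫ q, Lf n f v q ∂μ) +
      ∑ j, ((∫ q, Lg n m g v q j ∂(σp j)) - ∫ q, Lg n m g v q j ∂(σm j)) ≤ 0 := by
    have : ∑ j, ((∫ q, Lg n m g v q j ∂(σp j)) - ∫ q, Lg n m g v q j ∂(σm j)) ≤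
        ∑ j, ∫ q, p j q ∂μ := Finset.sum_le_sum fun j _ => hΔ j
    linarith
  have hv0 : 0 ≤ ∫ y, v (0, y) ∂μ₀ := by
    have hL := hliouville v hv
    linarith
  -- integrability over μ₀, μh₀
  have hvc : Continuous (fun y : Fin n → ℝ => v (0, y)) :=
    hv.continuous.comp (Continuous.prodMk_right (0:ℝ))
  have intwμ₀ : Integrable w μ₀ := integrable_of_null_compl μ₀ hX hμ₀X hw
  have intwμh₀ : Integrable w μh₀ := integrable_of_null_compl μh₀ hX hμh₀X hw
  have intvμ₀ : Integrable (fun y => v (0, y)) μ₀ := integrable_of_null_compl μ₀ hX hμ₀X hvc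
  -- μ₀ X = μ₀ univ
  have hXm : MeasurableSet X := hX.isClosed.measurableSet
  have hμ₀univ : μ₀ X = μ₀ univ := by
    have h := measure_add_measure_compl (μ := μ₀) hXm
    rw [hμ₀X, add_zero] at h
    exact h
  have h1 : (μ₀ X).toReal = ∫ _, (1:ℝ) ∂μ₀ := by
    rw [integral_const, smul_eq_mul, mul_one, hμ₀univ]; rfl
  have h2 : ∫ _, (1:ℝ) ∂μ₀ ≤ ∫ y, (w y - v (0, y)) ∂μ₀ :=
    integral_mono_ae (integrable_const 1) (intwμ₀.sub intvμ₀)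
      (aeμ₀.mono fun y hy => by show (1:ℝ) ≤ w y - v (0, y); have := hineq3 y hy; linarith)
  have h3 : ∫ y, (w y - v (0, y)) ∂μ₀ = (∫ y, w y ∂μ₀) - ∫ y, v (0, y) ∂μ₀ :=
    integral_sub intwμ₀ intvμ₀
  have h4 : 0 ≤ ∫ y, w y ∂μh₀ :=
    integral_nonneg_of_ae (aeμh₀.mono fun y hy => hwpos y hy)
  have h5 : ∫ y in X, w y = (∫ y, w y ∂μ₀) + ∫ y, w y ∂μh₀ := by
    rw [← hlam, integral_add_measure intwμ₀ intwμh₀]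
  linarith
end
end
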